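/- arXiv:1903.08123 — 7 statements merged into one kernel-verified Lean document; each statement's English description precedes it below -/
import Mathlib

section
/- Let G be a finitely generated metabelian group (i.e., the commutator subgroup [G,G] is abelian) with finite generating set S, and suppose there is a nontrivial element x ∈ Fitt(G) that is strictly exponentially distorted with respect to S. Then n ≼ F_{G,S}(n). -/
open Function
open scoped ENNReal NNReal

/-- Word length with respect to a finite generating set `S`. -/
noncomputable def wordLength {G : Type*} [Group G] (S : Finset G) (x : G) : ℕ :=
  sInf {n | ∃ l : List G, (∀ g ∈ l, g ∈ S ∨ g⁻¹ ∈ S) ∧ l.length = n ∧ l.prod = x}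

/-- The depth of an element: the minimal order of a finite quotient witnessing it. -/
noncomputable def depth {G : Type*} [Group G] (x : G) : ℕ∞ :=
  sInf {d : ℕ∞ | ∃ (H : Type) (_ : Group H) (_ : Fintype H) (φ : G →* H),
    Surjective φ ∧ φ x ≠ 1 ∧ (Fintype.card H : ℕ∞) = d}

/-- The residual finiteness growth function `F_{G,S}`. -/
noncomputable def rfGrowth {G : Type*} [Group G] (S : Finset G) (n : ℕ) : ℕ∞ :=
  sSup {d : ℕ∞ | ∃ x : G, x ≠ 1 ∧ wordLength S x ≤ n ∧ depth x = d}

/-- Residual finiteness. -/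
def ResiduallyFinite (G : Type*) [Group G] : Prop :=
  ∀ x : G, x ≠ 1 → ∃ (H : Type) (_ : Group H) (_ : Fintype H) (φ : G →* H),
    Surjective φ ∧ φ x ≠ 1

/-- Strict `f`-distortion of an element. -/
def StrictlyDistorted {G : Type*} [Group G] (S : Finset G) (f : ℕ → ℕ) (x : G) : Prop :=
  ∃ C₁ C₂ : ℝ, 0 < C₁ ∧ 0 < C₂ ∧ ∀ n : ℤ, n ≠ 0 →
    C₁ * |(n : ℝ)| ≤ (f (wordLength S (x ^ n)) : ℝ) ∧
      (f (wordLength S (x ^ n)) : ℝ) ≤ C₂ * |(n : ℝ)|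

/-- The Fitting subgroup: the subgroup generated by all nilpotent normal subgroups. -/
def fitt (G : Type*) [Group G] : Subgroup G :=
  ⨆ (N : Subgroup G) (_ : N.Normal) (_ : Group.IsNilpotent N), N

/-- Virtually nilpotent groups. -/
def VirtuallyNilpotent (G : Type*) [Group G] : Prop :=
  ∃ H : Subgroup G, H.FiniteIndex ∧ Group.IsNilpotent H

/-! ### Auxiliary number-theoretic lemmas: `lcm(1, …, n) ≤ 2 ^ (400 (n+1))` -/

/-- `lcm(1, …, n)`. -/
def Lnat (n : ℕ) : ℕ := (Finset.Icc 1 n).lcm id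

lemma Lnat_ne_zero (n : ℕ) : Lnat n ≠ 0 := by
  intro h
  rw [Lnat, Finset.lcm_eq_zero_iff] at h
  simp at h

lemma dvd_Lnat {d n : ℕ} (h1 : 1 ≤ d) (h2 : d ≤ n) : d ∣ Lnat n := by
  have : d ∈ Finset.Icc 1 n := by simp [Finset.mem_Icc]; omega
  exact Finset.dvd_lcm (f := id) this

lemma Lnat_le_factorial (n : ℕ) : Lnat n ≤ Nat.factorial n := by
  apply Nat.le_of_dvd (Nat.factorial_pos n)
  apply Finset.lcm_dvd
  intro k hk
  simp only [Finset.mem_Icc] at hk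
  exact Nat.dvd_factorial (show 0 < k by omega) hk.2

lemma factorization_Lnat_le {p n : ℕ} (hp : p.Prime) (hn : n ≠ 0) :
    (Lnat n).factorization p ≤ Nat.log p n := by
  rw [Lnat]
  have key : ∀ s : Finset ℕ, (∀ k ∈ s, 1 ≤ k ∧ k ≤ n) →
      (s.lcm id).factorization p ≤ Nat.log p n := by
    intro s
    induction s using Finset.induction_on with
    | empty => intro _; simp
    | insert a s' ha ih =>
      intro hmem
      rw [Finset.lcm_insert]
      have ha0 : a ≠ 0 := by have := hmem a (Finset.mem_insert_self a s'); omega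
      have hs0 : s'.lcm id ≠ 0 := by
        intro h
        rw [Finset.lcm_eq_zero_iff] at h
        simp only [Set.mem_image, Finset.mem_coe, id_eq] at h
        obtain ⟨k, hk, hk0⟩ := h
        have := hmem k (Finset.mem_insert_of_mem hk)
        omega
      have : (lcm (id a) (s'.lcm id)) = Nat.lcm a (s'.lcm id) := rfl
      rw [this, Nat.factorization_lcm ha0 hs0]
      rw [Finsupp.sup_apply]
      apply sup_le
      · have h1 : p ^ a.factorization p ∣ a := Nat.ordProj_dvd a p
        have h2 : p ^ a.factorization p ≤ n :=
          le_trans (Nat.le_of_dvd (by omega) h1) (hmem a (Finset.mem_insert_self a s')).2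
        exact (Nat.le_log_iff_pow_le hp.one_lt hn).mpr h2
      · exact ih (fun k hk => hmem k (Finset.mem_insert_of_mem hk))
  exact key _ (fun k hk => by simp only [Finset.mem_Icc] at hk; exact hk)

lemma pow_factorization_Lnat_le {p n : ℕ} (hp : p.Prime) (hn : n ≠ 0) :
    p ^ (Lnat n).factorization p ≤ n :=
  le_trans (Nat.pow_le_pow_right hp.pos (factorization_Lnat_le hp hn))
    (Nat.pow_log_le_self p hn)

lemma sq_le_two_pow {k : ℕ} (hk : 6 ≤ k) : (k+1)*(k+1) ≤ 2 ^ k := by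
  induction k, hk using Nat.le_induction with
  | base => norm_num
  | succ k hk ih =>
    have : (k+2)*(k+2) ≤ 2*((k+1)*(k+1)) := by nlinarith
    calc (k+1+1)*(k+1+1) ≤ 2*((k+1)*(k+1)) := this
    _ ≤ 2 * 2^k := by omega
    _ = 2^(k+1) := by ring

lemma log_succ_le_sqrt {n : ℕ} (hn : 64 ≤ n) : Nat.log 2 n + 1 ≤ Nat.sqrt n := by
  set k := Nat.log 2 n with hk
  have h6 : 6 ≤ k := by
    rw [hk]
    exact (Nat.le_log_iff_pow_le (by norm_num) (by omega)).mpr (by norm_num; omega)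
  have h1 : 2 ^ k ≤ n := Nat.pow_log_le_self 2 (by omega)
  have h2 : (k+1)*(k+1) ≤ n := le_trans (sq_le_two_pow h6) h1
  exact Nat.le_sqrt.mpr h2

lemma pow_sqrt_le {n : ℕ} (hn : 64 ≤ n) : n ^ Nat.sqrt n ≤ 2 ^ n := by
  have h1 : n < 2 ^ (Nat.log 2 n + 1) := Nat.lt_pow_succ_log_self (by norm_num) n
  calc n ^ Nat.sqrt n ≤ (2 ^ (Nat.log 2 n + 1)) ^ Nat.sqrt n :=
        Nat.pow_le_pow_left (le_of_lt h1) _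
    _ = 2 ^ ((Nat.log 2 n + 1) * Nat.sqrt n) := by rw [← pow_mul]
    _ ≤ 2 ^ (Nat.sqrt n * Nat.sqrt n) := by
        apply Nat.pow_le_pow_right (by norm_num)
        exact Nat.mul_le_mul_right _ (log_succ_le_sqrt hn)
    _ ≤ 2 ^ n := Nat.pow_le_pow_right (by norm_num) (by nlinarith [Nat.sqrt_le' n])

open Finset in
lemma Lnat_le_big {n : ℕ} (hn : 64 ≤ n) : Lnat n ≤ 2 ^ (3 * n) := by
  have hn0 : n ≠ 0 := by omega
  have hL0 : Lnat n ≠ 0 := Lnat_ne_zero n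
  set f := (Lnat n).factorization with hf
  have hrec : (Lnat n) = ∏ p ∈ f.support, p ^ f p := by
    rw [hf]; exact (Nat.factorization_prod_pow_eq_self hL0).symm
  have hprime : ∀ p ∈ f.support, p.Prime := fun p hp =>
    Nat.prime_of_mem_primeFactors (by rwa [← Nat.support_factorization])
  have hple : ∀ p ∈ f.support, p ^ f p ≤ n := fun p hp =>
    pow_factorization_Lnat_le (hprime p hp) hn0
  have hfpos : ∀ p ∈ f.support, 1 ≤ f p := fun p hp =>
    Nat.one_le_iff_ne_zero.mpr (Finsupp.mem_support_iff.mp hp)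
  rw [hrec]
  rw [← Finset.prod_filter_mul_prod_filter_not f.support (fun p => p ≤ Nat.sqrt n)]
  have h1 : (∏ p ∈ f.support.filter (fun p => p ≤ Nat.sqrt n), p ^ f p) ≤ 2 ^ n := by
    calc (∏ p ∈ f.support.filter (fun p => p ≤ Nat.sqrt n), p ^ f p)
        ≤ ∏ _p ∈ f.support.filter (fun p => p ≤ Nat.sqrt n), n := by
          apply Finset.prod_le_prod' <;> intro p hp
          exact hple p (Finset.mem_filter.mp hp).1
      _ = n ^ (f.support.filter (fun p => p ≤ Nat.sqrt n)).card := by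
          rw [Finset.prod_const]
      _ ≤ n ^ Nat.sqrt n := by
          apply Nat.pow_le_pow_right (by omega)
          calc (f.support.filter (fun p => p ≤ Nat.sqrt n)).card
              ≤ (Finset.Icc 2 (Nat.sqrt n)).card := by
                apply Finset.card_le_card
                intro p hp
                obtain ⟨hps, hple'⟩ := Finset.mem_filter.mp hp
                simp only [Finset.mem_Icc]
                exact ⟨(hprime p hps).two_le, hple'⟩
            _ ≤ Nat.sqrt n := by rw [Nat.card_Icc]; omega
      _ ≤ 2 ^ n := pow_sqrt_le hn
  have h2 : (∏ p ∈ f.support.filter (fun p => ¬ p ≤ Nat.sqrt n), p ^ f p) ≤ 4 ^ n := by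
    calc (∏ p ∈ f.support.filter (fun p => ¬ p ≤ Nat.sqrt n), p ^ f p)
        ≤ ∏ p ∈ f.support.filter (fun p => ¬ p ≤ Nat.sqrt n), p := by
          apply Finset.prod_le_prod' ; intro p hp
          obtain ⟨hps, hgt⟩ := Finset.mem_filter.mp hp
          have hfple : f p ≤ 1 := by
            by_contra hcon
            push_neg at hcon
            have : p * p ≤ p ^ f p := by
              calc p * p = p ^ 2 := (sq p).symm
              _ ≤ p ^ f p := Nat.pow_le_pow_right (hprime p hps).pos hcon
            have h3 : n < p * p := by
              have := Nat.sqrt_lt'.mp (show Nat.sqrt n < p by omega); nlinarith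
            have := hple p hps
            omega
          calc p ^ f p ≤ p ^ 1 := Nat.pow_le_pow_right (hprime p hps).pos hfple
          _ = p := pow_one p
      _ ≤ ∏ p ∈ (Finset.range (n+1)).filter Nat.Prime, p := by
          apply Finset.prod_le_prod_of_subset_of_one_le'
          · intro p hp
            obtain ⟨hps, _⟩ := Finset.mem_filter.mp hp
            simp only [Finset.mem_filter, Finset.mem_range]
            constructor
            · have : p ≤ p ^ f p := Nat.le_self_pow (by have := hfpos p hps; omega) p
              have := hple p hps; omega
            · exact hprime p hps
          · intro p hp _
            exact (Finset.mem_filter.mp hp).2.one_lt.le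
      _ = primorial n := rfl
      _ ≤ 4 ^ n := primorial_le_4_pow n
  calc _ ≤ 2 ^ n * 4 ^ n := Nat.mul_le_mul h1 h2
  _ = 2 ^ (3 * n) := by rw [show (4:ℕ) = 2^2 by norm_num, ← pow_mul, ← pow_add]; ring_nf

lemma Lnat_le (n : ℕ) : Lnat n ≤ 2 ^ (400 * (n + 1)) := by
  rcases le_or_gt 64 n with h | h
  · exact le_trans (Lnat_le_big h) (Nat.pow_le_pow_right (by norm_num) (by omega))
  · calc Lnat n ≤ Nat.factorial n := Lnat_le_factorial n
    _ ≤ n ^ n := Nat.factorial_le_pow n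
    _ ≤ 64 ^ 64 := by
        rcases Nat.eq_zero_or_pos n with h0 | h0
        · subst h0; norm_num
        · calc n ^ n ≤ 64 ^ n := Nat.pow_le_pow_left (by omega) n
          _ ≤ 64 ^ 64 := Nat.pow_le_pow_right (by norm_num) (by omega)
    _ = (2^6) ^ 64 := by norm_num
    _ = 2 ^ 384 := by rw [← pow_mul]
    _ ≤ 2 ^ (400 * (n+1)) := Nat.pow_le_pow_right (by norm_num) (by omega)

/-! ### Group-theoretic lemmas -/

lemma wordLength_one {G : Type*} [Group G] (S : Finset G) : wordLength S 1 = 0 := by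
  apply Nat.sInf_eq_zero.mpr
  left
  exact ⟨[], by simp, rfl, List.prod_nil⟩

/-- if `G` is a finitely generated metabelian group with a nontrivial strictly
exponentially distorted element `x ∈ Fitt(G)`, then `n ≼ F_{G,S}(n)`. -/
theorem metabelian_lower_bound {G : Type*} [Group G] (S : Finset G)
    (hgen : Subgroup.closure (S : Set G) = ⊤)
    (hmeta : ∀ a ∈ commutator G, ∀ b ∈ commutator G, a * b = b * a)
    (x : G) (hx : x ≠ 1) (hxFitt : x ∈ fitt G)
    (hdist : StrictlyDistorted S (fun n => 2 ^ n) x) :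
    ∃ C : ℕ, 0 < C ∧ ∀ n : ℕ, (n : ℕ∞) ≤ (C : ℕ∞) * rfGrowth S (C * n) := by
  obtain ⟨C₁, C₂, hC₁, hC₂, hC⟩ := hdist
  simp only [] at hC
  -- the threshold beyond which powers of `x` are nontrivial
  set M : ℕ := ⌈2 / C₁⌉₊ + 1 with hM
  have hM1 : 1 ≤ M := by omega
  have hxm : ∀ m : ℕ, M ≤ m → x ^ m ≠ 1 := by
    intro m hm hxe
    have hm0 : (m : ℤ) ≠ 0 := by exact_mod_cast (show m ≠ 0 by omega)
    have h1 := (hC (m : ℤ) hm0).1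
    rw [zpow_natCast, hxe, wordLength_one] at h1
    simp only [pow_zero, Nat.cast_one] at h1
    rw [abs_of_nonneg (by positivity)] at h1
    push_cast at h1
    have hceil : (2 / C₁ : ℝ) ≤ ⌈2 / C₁⌉₊ := Nat.le_ceil _
    have hMm : (M : ℝ) ≤ (m : ℝ) := by exact_mod_cast hm
    have hMval : (M : ℝ) = ⌈2 / C₁⌉₊ + 1 := by rw [hM]; push_cast; ring
    have h2 : (2 : ℝ) ≤ C₁ * M := by
      rw [hMval]
      have := (div_le_iff₀ hC₁).mp hceil
      nlinarith
    nlinarith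
  -- word-length bound for powers
  set D : ℕ := ⌈C₂⌉₊ with hD
  have hD1 : 1 ≤ D := Nat.one_le_iff_ne_zero.mpr (by positivity)
  have hword : ∀ m : ℕ, m ≠ 0 →
      wordLength S (x ^ m) ≤ Nat.log 2 D + Nat.log 2 m + 2 := by
    intro m hm
    have hm0 : (m : ℤ) ≠ 0 := by exact_mod_cast hm
    have h1 := (hC (m : ℤ) hm0).2
    rw [zpow_natCast] at h1
    rw [abs_of_nonneg (by positivity)] at h1
    set w := wordLength S (x ^ m) with hw
    have h2 : ((2 ^ w : ℕ) : ℝ) ≤ (D : ℝ) * m := by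
      push_cast at h1 ⊢
      calc (2:ℝ) ^ w ≤ C₂ * m := h1
      _ ≤ (D:ℝ) * m := by
          apply mul_le_mul_of_nonneg_right (Nat.le_ceil C₂) (by positivity)
    have h3 : 2 ^ w ≤ D * m := by exact_mod_cast h2
    have h4 : w ≤ Nat.log 2 (D * m) :=
      (Nat.le_log_iff_pow_le (by norm_num) (by positivity)).mpr h3
    have h5 : D * m < 2 ^ (Nat.log 2 D + Nat.log 2 m + 2) := by
      have hd : D < 2 ^ (Nat.log 2 D + 1) := Nat.lt_pow_succ_log_self (by norm_num) D
      have hm' : m < 2 ^ (Nat.log 2 m + 1) := Nat.lt_pow_succ_log_self (by norm_num) m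
      calc D * m < 2 ^ (Nat.log 2 D + 1) * 2 ^ (Nat.log 2 m + 1) :=
            Nat.mul_lt_mul_of_lt_of_lt hd hm'
      _ = 2 ^ (Nat.log 2 D + Nat.log 2 m + 2) := by rw [← pow_add]; ring_nf
    have h6 : Nat.log 2 (D * m) < Nat.log 2 D + Nat.log 2 m + 2 :=
      Nat.log_lt_of_lt_pow (by positivity) h5
    omega
  -- the constant
  set A : ℕ := Nat.log 2 D + 2 with hA
  refine ⟨A + 400 * (M + 2), by positivity, ?_⟩
  set C : ℕ := A + 400 * (M + 2) with hCdef
  intro n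
  rcases Nat.eq_zero_or_pos n with hn0 | hn0
  · subst hn0; simp
  -- the key element
  set k : ℕ := max n M with hk
  have hkM : M ≤ k := le_max_right n M
  have hkn : n ≤ k := le_max_left n M
  have hknM : k ≤ n + M := by omega
  set m : ℕ := Lnat k with hm
  have hm0 : m ≠ 0 := Lnat_ne_zero k
  have hkm : k ≤ m := Nat.le_of_dvd (Nat.pos_of_ne_zero hm0) (dvd_Lnat (by omega) le_rfl)
  set y : G := x ^ m with hy
  have hy1 : y ≠ 1 := hxm m (by omega)
  -- word length of y is at most C * n
  have hwy : wordLength S y ≤ C * n := by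
    have h1 := hword m hm0
    have h2 : Nat.log 2 m ≤ 400 * (k + 1) := by
      calc Nat.log 2 m ≤ Nat.log 2 (2 ^ (400 * (k+1))) := Nat.log_mono_right (Lnat_le k)
      _ = 400 * (k+1) := Nat.log_pow (by norm_num) _
    have h3 : wordLength S y ≤ A + 400 * (k + 1) := by rw [hy]; omega
    have h4 : A + 400 * (k + 1) ≤ C * n := by
      rw [hCdef]
      have : k + 1 ≤ n + M + 1 := by omega
      have h5 : A ≤ A * n := Nat.le_mul_of_pos_right A hn0
      have h6 : M + 1 ≤ (M + 1) * n := Nat.le_mul_of_pos_right _ hn0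
      have h7 : (A + 400 * (M + 2)) * n = A * n + 400 * ((M + 1) * n) + 400 * n := by ring
      rw [h7]
      omega
    omega
  -- depth of y is at least n
  have hdepth : (n : ℕ∞) ≤ depth y := by
    apply le_sInf
    rintro d ⟨H, hG, hF, φ, hsurj, hne, hcard⟩
    letI := hG
    letI := hF
    have horder : k < orderOf (φ x) := by
      by_contra hcon
      push_neg at hcon
      have hop : 0 < orderOf (φ x) := orderOf_pos (φ x)
      have hdvd : orderOf (φ x) ∣ m := dvd_trans (dvd_Lnat hop hcon) dvd_rfl
      have : (φ x) ^ m = 1 := orderOf_dvd_iff_pow_eq_one.mp hdvd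
      apply hne
      rw [hy, map_pow, this]
    have hcard' : k < Fintype.card H := lt_of_lt_of_le horder orderOf_le_card_univ
    rw [← hcard]
    exact_mod_cast Nat.cast_le.mpr (show n ≤ Fintype.card H by omega)
  -- conclude
  have hrf : depth y ≤ rfGrowth S (C * n) := le_sSup ⟨y, hy1, hwy, rfl⟩
  calc (n : ℕ∞) ≤ depth y := hdepth
  _ ≤ rfGrowth S (C * n) := hrf
  _ ≤ (C : ℕ∞) * rfGrowth S (C * n) :=
      le_mul_of_one_le_left' (by exact_mod_cast Nat.one_le_iff_ne_zero.mpr (by positivity))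
end

section
/- For every integer m > 1, the metabelian Baumslag–Solitar group BS(1,m) = ⟨a, t | t a t⁻¹ = aᵐ⟩, with generating set S = {a, t}, satisfies n ≼ F_{BS(1,m),S}(n): there is a constant C > 0 such that for every n ≥ 1 there is a nontrivial element g of word length at most C·n such that every finite group H admitting a surjective homomorphism φ: BS(1,m) → H with φ(g) ≠ 1 satisfies |H| ≥ n/C. -/
open Function

/-- The defining relation `t a t⁻¹ a⁻ᵐ` of `BS(1,m)`, with `false ↦ a` and `true ↦ t`. -/
def BSRel (m : ℕ) : Set (FreeGroup Bool) :=
  {FreeGroup.of true * FreeGroup.of false * (FreeGroup.of true)⁻¹ *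
    (FreeGroup.of false) ^ (-(m : ℤ))}

/-- The Baumslag–Solitar group `BS(1,m) = ⟨a, t ∣ t a t⁻¹ = aᵐ⟩`. -/
def BS (m : ℕ) : Type := PresentedGroup (BSRel m)

instance (m : ℕ) : Group (BS m) := by unfold BS; infer_instance

/-- The generator `a` of `BS(1,m)`. -/
def BSa (m : ℕ) : BS m := PresentedGroup.of false

/-- The generator `t` of `BS(1,m)`. -/
def BSt (m : ℕ) : BS m := PresentedGroup.of true

/-- The generating set `S = {a, t}` of `BS(1,m)`. -/
noncomputable def BSGenSet (m : ℕ) : Finset (BS m) :=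
  letI := Classical.decEq (BS m)
  {BSa m, BSt m}

/-! ### Auxiliary lemmas -/

lemma bs_rel (m : ℕ) : BSt m * BSa m * (BSt m)⁻¹ = (BSa m) ^ m := by
  have h : (PresentedGroup.mk (BSRel m))
      (FreeGroup.of true * FreeGroup.of false * (FreeGroup.of true)⁻¹ *
        (FreeGroup.of false) ^ (-(m : ℤ))) = 1 := by
    have : (FreeGroup.of true * FreeGroup.of false * (FreeGroup.of true)⁻¹ *
        (FreeGroup.of false) ^ (-(m : ℤ))) ∈ Subgroup.normalClosure (BSRel m) :=
      Subgroup.subset_normalClosure rfl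
    exact (QuotientGroup.eq_one_iff _).mpr this
  simp only [map_mul, map_inv, map_zpow] at h
  have h2 : BSt m * BSa m * (BSt m)⁻¹ * (BSa m) ^ (-(m:ℤ)) = 1 := h
  have h3 := mul_eq_one_iff_eq_inv.mp h2
  rw [h3, ← zpow_natCast (BSa m) m]
  group

lemma bs_conj_pow (m q : ℕ) : BSt m * (BSa m) ^ q * (BSt m)⁻¹ = (BSa m) ^ (m * q) := by
  have h := map_pow (MulAut.conj (BSt m)) (BSa m) q
  simp only [MulAut.conj_apply] at h
  rw [h, bs_rel, ← pow_mul, mul_comm m q]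

lemma bs_conj_iter (m : ℕ) : ∀ k : ℕ, (BSt m) ^ k * BSa m * ((BSt m) ^ k)⁻¹ = (BSa m) ^ (m ^ k)
  | 0 => by simp
  | k + 1 => by
    have h := bs_conj_iter m k
    have e : (BSt m) ^ (k+1) * BSa m * ((BSt m) ^ (k+1))⁻¹
        = BSt m * ((BSt m) ^ k * BSa m * ((BSt m) ^ k)⁻¹) * (BSt m)⁻¹ := by
      rw [pow_succ']; group
    rw [e, h, bs_conj_pow, pow_succ']

lemma addRight_pow (k : ℕ) : (Equiv.addRight (1:ℚ)) ^ k = Equiv.addRight (k:ℚ) := by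
  induction k with
  | zero => ext x; simp
  | succ k ih => ext x; simp [pow_succ, ih, Equiv.Perm.mul_apply]; ring

noncomputable def bsRep (m : ℕ) (hm : 0 < m) : BS m →* Equiv.Perm ℚ := by
  refine PresentedGroup.toGroup (f := fun b => if b then Equiv.mulLeft₀ (m:ℚ)
    (by exact_mod_cast hm.ne') else Equiv.addRight (1:ℚ)) ?_
  rintro r rfl
  simp only [map_mul, map_inv, map_zpow, FreeGroup.lift_apply_of, Bool.if_true_left]
  rw [mul_eq_one_iff_eq_inv, ← zpow_neg, neg_neg, zpow_natCast]
  simp only [if_true, Bool.false_eq_true, if_false, addRight_pow]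
  rw [mul_inv_eq_iff_eq_mul]
  ext x
  simp [Equiv.Perm.mul_apply]
  ring

lemma bsRep_a (m : ℕ) (hm : 0 < m) : bsRep m hm (BSa m) = Equiv.addRight (1:ℚ) := by
  exact PresentedGroup.toGroup.of _

lemma bsa_pow_ne_one (m : ℕ) (hm : 0 < m) (N : ℕ) (hN : 0 < N) : (BSa m) ^ N ≠ 1 := by
  intro h
  have h2 := congrArg (bsRep m hm) h
  rw [map_pow, bsRep_a, addRight_pow, map_one] at h2
  have h3 := congrArg (fun e : Equiv.Perm ℚ => e 0) h2
  simp at h3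
  omega

lemma bs_word (m : ℕ) (hm : 1 < m) : ∀ (j N : ℕ), N < m ^ j →
    ∃ l : List (BS m), (∀ g ∈ l, g ∈ BSGenSet m ∨ g⁻¹ ∈ BSGenSet m) ∧
      l.length ≤ (m + 2) * j ∧ l.prod = (BSa m) ^ N := by
  intro j
  induction j with
  | zero =>
    intro N hN
    rw [pow_zero] at hN
    have hN0 : N = 0 := by omega
    subst hN0
    exact ⟨[], by simp, by simp, by simp⟩
  | succ j ih =>
    intro N hN
    have hm0 : 0 < m := by omega
    have hq : N / m < m ^ j := by
      rw [Nat.div_lt_iff_lt_mul hm0]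
      calc N < m ^ (j+1) := hN
      _ = m ^ j * m := by rw [pow_succ]
    obtain ⟨l', hmem, hlen, hprod⟩ := ih (N / m) hq
    refine ⟨List.replicate (N % m) (BSa m) ++ (BSt m) :: (l' ++ [(BSt m)⁻¹]), ?_, ?_, ?_⟩
    · intro g hg
      simp only [List.mem_append, List.mem_cons, List.mem_replicate, List.mem_singleton] at hg
      have ha : BSa m ∈ BSGenSet m := by
        unfold BSGenSet; letI := Classical.decEq (BS m); simp
      have ht : BSt m ∈ BSGenSet m := by
        unfold BSGenSet; letI := Classical.decEq (BS m); simp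
      rcases hg with ⟨_, rfl⟩ | rfl | hg | rfl | hbad
      · exact Or.inl ha
      · exact Or.inl ht
      · exact hmem g hg
      · right; rw [inv_inv]; exact ht
      · exact absurd hbad List.not_mem_nil
    · simp only [List.length_append, List.length_cons, List.length_replicate,
        List.length_singleton, List.length_nil]
      have h1 : N % m < m := Nat.mod_lt _ hm0
      have h2 : (m + 2) * (j + 1) = (m + 2) * j + (m + 2) := by ring
      omega
    · rw [List.prod_append, List.prod_cons, List.prod_replicate, List.prod_append,
        hprod, List.prod_singleton]
      have : BSt m * ((BSa m) ^ (N / m) * (BSt m)⁻¹) = (BSa m) ^ (m * (N / m)) := by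
        rw [← mul_assoc, bs_conj_pow]
      rw [this, ← pow_add]
      exact congrArg _ (Nat.mod_add_div N m)

lemma bs_wordLength_le (m : ℕ) (hm : 1 < m) (j N : ℕ) (h : N < m ^ j) :
    wordLength (BSGenSet m) ((BSa m) ^ N) ≤ (m + 2) * j := by
  obtain ⟨l, h1, h2, h3⟩ := bs_word m hm j N h
  calc wordLength (BSGenSet m) ((BSa m) ^ N) ≤ l.length :=
        Nat.sInf_le ⟨l, h1, rfl, h3⟩
  _ ≤ (m + 2) * j := h2

/-- for `m > 1`, the Baumslag–Solitar group `BS(1,m)` satisfies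
`n ≼ F_{BS(1,m),S}(n)` with `S = {a, t}`. -/
theorem BS_lower_bound (m : ℕ) (hm : 1 < m) :
    ∃ C : ℝ, 0 < C ∧ ∀ n : ℕ, 1 ≤ n →
      ∃ g : BS m, g ≠ 1 ∧ (wordLength (BSGenSet m) g : ℝ) ≤ C * n ∧
        ∀ (H : Type) [Group H] [Fintype H] (φ : BS m →* H),
          Surjective φ → φ g ≠ 1 → (n : ℝ) / C ≤ Fintype.card H := by
  have hm0 : 0 < m := by omega
  refine ⟨(m : ℝ) + 2, by positivity, ?_⟩
  intro n hn
  set s := Nat.sqrt n with hs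
  have hs1 : 1 ≤ s := by
    rw [hs]
    have := Nat.sqrt_pos.mpr (by omega : 0 < n)
    omega
  set N := ∏ f ∈ Finset.Icc 1 s, (m ^ f - 1) with hN
  have hfac : ∀ f ∈ Finset.Icc 1 s, 1 ≤ m ^ f - 1 := by
    intro f hf
    rw [Finset.mem_Icc] at hf
    have : 2 ≤ m ^ f := by
      calc 2 ≤ m := hm
      _ = m ^ 1 := (pow_one m).symm
      _ ≤ m ^ f := Nat.pow_le_pow_right hm0 hf.1
    omega
  have hN1 : 1 ≤ N := Finset.one_le_prod' hfac
  have hNlt : N < m ^ (s * s) := by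
    have hb : ∀ f ∈ Finset.Icc 1 s, m ^ f - 1 ≤ m ^ s - 1 := by
      intro f hf
      rw [Finset.mem_Icc] at hf
      have := Nat.pow_le_pow_right hm0 hf.2
      omega
    calc N ≤ (m ^ s - 1) ^ (Finset.Icc 1 s).card := Finset.prod_le_pow_card _ _ _ hb
    _ = (m ^ s - 1) ^ s := by rw [Nat.card_Icc]; norm_num
    _ < (m ^ s) ^ s := by
        apply Nat.pow_lt_pow_left _ (by omega)
        have : 1 ≤ m ^ s := Nat.one_le_pow _ _ hm0
        omega
    _ = m ^ (s * s) := by rw [← pow_mul]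
  refine ⟨(BSa m) ^ N, bsa_pow_ne_one m hm0 N hN1, ?_, ?_⟩
  · have hw := bs_wordLength_le m hm (s * s) N hNlt
    have hss : s * s ≤ n := Nat.sqrt_le n
    have hnat : wordLength (BSGenSet m) ((BSa m) ^ N) ≤ (m + 2) * n :=
      le_trans hw (Nat.mul_le_mul_left _ hss)
    calc (wordLength (BSGenSet m) ((BSa m) ^ N) : ℝ) ≤ (((m + 2) * n : ℕ) : ℝ) := by
          exact_mod_cast hnat
    _ = ((m : ℝ) + 2) * n := by push_cast; ring
  · intro H _ _ φ hsurj hφ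
    set x := φ (BSa m) with hx
    set d := orderOf x with hd
    have hxN : x ^ N ≠ 1 := by rw [hx, ← map_pow]; exact hφ
    have hdN : ¬ d ∣ N := fun h => hxN (orderOf_dvd_iff_pow_eq_one.mp h)
    have hd0 : d ≠ 0 := (orderOf_pos x).ne'
    have hd1 : 1 < d := by
      rcases Nat.lt_or_ge d 2 with h | h
      · interval_cases d
        · omega
        · exact absurd (one_dvd N) hdN
      · exact h
    haveI : NeZero d := ⟨hd0⟩
    set e := orderOf (φ (BSt m)) with he
    have he0 : 0 < e := orderOf_pos _
    have hconj : ∀ k : ℕ, (φ (BSt m)) ^ k * x * ((φ (BSt m)) ^ k)⁻¹ = x ^ (m ^ k) := by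
      intro k
      have h2 := congrArg φ (bs_conj_iter m k)
      simpa only [map_mul, map_pow, map_inv] using h2
    have key : ∀ k : ℕ, x ^ (m ^ k) = x ↔ ((m : ZMod d)) ^ k = 1 := by
      intro k
      have e1 : ((m : ZMod d)) ^ k = ((m ^ k : ℕ) : ZMod d) := by push_cast; ring
      have e2 : (1 : ZMod d) = ((1 : ℕ) : ZMod d) := by simp
      rw [e1, e2, ZMod.natCast_eq_natCast_iff]
      constructor
      · intro h
        have h2 : x ^ (m ^ k) = x ^ 1 := by simpa using h
        exact pow_eq_pow_iff_modEq.mp h2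
      · intro h
        have h2 : x ^ (m ^ k) = x ^ 1 := pow_eq_pow_iff_modEq.mpr h
        simpa using h2
    have hme : x ^ (m ^ e) = x := by
      have h2 := hconj e
      rw [pow_orderOf_eq_one] at h2
      simpa using h2.symm
    have hfin : IsOfFinOrder ((m : ZMod d)) :=
      isOfFinOrder_iff_pow_eq_one.mpr ⟨e, he0, (key e).mp hme⟩
    set f0 := orderOf ((m : ZMod d)) with hf0
    have hf0pos : 0 < f0 := hfin.orderOf_pos
    have hf0s : s < f0 := by
      by_contra hle
      push_neg at hle
      have hmem : f0 ∈ Finset.Icc 1 s := Finset.mem_Icc.mpr ⟨hf0pos, hle⟩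
      have h1 : x ^ (m ^ f0) = x := (key f0).mpr (pow_orderOf_eq_one _)
      have h2 : m ^ f0 ≡ 1 [MOD d] := pow_eq_pow_iff_modEq.mp (by simpa using h1)
      have h3 : d ∣ m ^ f0 - 1 :=
        (Nat.modEq_iff_dvd' (Nat.one_le_pow _ _ hm0)).mp h2.symm
      exact hdN (h3.trans (Finset.dvd_prod_of_mem _ hmem))
    have hdf : f0 < d := by
      obtain ⟨u, hu⟩ := hfin.isUnit
      have hou : orderOf u = f0 := by rw [← orderOf_units, hu]
      have h1 : orderOf u ∣ Fintype.card (ZMod d)ˣ := orderOf_dvd_card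
      rw [ZMod.card_units_eq_totient] at h1
      have h2 : f0 ≤ d.totient :=
        Nat.le_of_dvd (Nat.totient_pos.mpr (by omega)) (hou ▸ h1)
      have h3 := Nat.totient_lt d hd1
      omega
    set A := Subgroup.zpowers x with hA
    have haux : ∀ i j : Fin f0, (i : ℕ) ≤ (j : ℕ) →
        (((φ (BSt m)) ^ (i : ℕ) : H) : H ⧸ A) = (((φ (BSt m)) ^ (j : ℕ) : H) : H ⧸ A)
        → i = j := by
      intro i j hle hij
      have hmem : ((φ (BSt m)) ^ (i : ℕ))⁻¹ * (φ (BSt m)) ^ (j : ℕ) ∈ A :=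
        (QuotientGroup.eq).mp hij
      have hij2 : ((φ (BSt m)) ^ (i : ℕ))⁻¹ * (φ (BSt m)) ^ (j : ℕ)
          = (φ (BSt m)) ^ ((j : ℕ) - (i : ℕ)) := by
        have : (φ (BSt m)) ^ (j : ℕ) = (φ (BSt m)) ^ (i : ℕ) *
            (φ (BSt m)) ^ ((j : ℕ) - (i : ℕ)) := by
          rw [← pow_add, Nat.add_sub_cancel' hle]
        rw [this, inv_mul_cancel_left]
      rw [hij2] at hmem
      obtain ⟨z, hz⟩ := Subgroup.mem_zpowers_iff.mp hmem
      have hxx : x ^ (m ^ ((j : ℕ) - (i : ℕ))) = x := by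
        rw [← hconj ((j : ℕ) - (i : ℕ)), ← hz]
        group
      have h1 : ((m : ZMod d)) ^ ((j : ℕ) - (i : ℕ)) = 1 := (key _).mp hxx
      have h2 : f0 ∣ (j : ℕ) - (i : ℕ) := orderOf_dvd_of_pow_eq_one h1
      have h3 : (j : ℕ) - (i : ℕ) < f0 := by
        have := j.isLt
        omega
      have h4 : (j : ℕ) - (i : ℕ) = 0 := Nat.eq_zero_of_dvd_of_lt h2 h3 |> fun h => by
        omega
      exact Fin.ext (by omega)
    have hinj : Function.Injective
        (fun j : Fin f0 => (((φ (BSt m)) ^ (j : ℕ) : H) : H ⧸ A)) := by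
      intro i j hij
      rcases Nat.le_total (i : ℕ) (j : ℕ) with h | h
      · exact haux i j h hij
      · exact (haux j i h hij.symm).symm
    have hidx : f0 ≤ A.index := by
      have h1 : Nat.card (Fin f0) ≤ Nat.card (H ⧸ A) :=
        Nat.card_le_card_of_injective _ hinj
      simpa [Subgroup.index] using h1
    have hcard : Fintype.card H = A.index * d := by
      rw [← Nat.card_eq_fintype_card, ← Subgroup.index_mul_card A, hA, Nat.card_zpowers]
    have hn_lt : n < Fintype.card H := by
      have h2 : n < (s + 1) * (s + 1) := Nat.lt_succ_sqrt n
      have h3 : (s + 1) * (s + 1) ≤ f0 * d :=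
        Nat.mul_le_mul (by omega) (by omega)
      have h4 : f0 * d ≤ A.index * d := Nat.mul_le_mul_right _ hidx
      omega
    have hC1 : (1 : ℝ) ≤ (m : ℝ) + 2 := by
      have : (0:ℝ) ≤ (m:ℝ) := Nat.cast_nonneg m
      linarith
    calc (n : ℝ) / ((m : ℝ) + 2) ≤ (n : ℝ) :=
          div_le_self (by positivity) hC1
    _ ≤ Fintype.card H := by exact_mod_cast hn_lt.le
end

section
/- Let G be a residually finite, finitely generated solvable group (with finite generating set S) of infinite Prüfer rank, and suppose there is a nontrivial infinite-order element x ∈ Fitt(G) that is strictly f-distorted for some nondecreasing f: ℕ → ℕ with 2^n ≼ f(n) ≼ 2^(2^n). Then n ≼ F_{G,S}(n). Moreover, if x has nilpotent depth m > 1, i.e., there is a nilpotent normal subgroup N of G with ⟨x⟩ ∩ γ_m(N) ≠ {1}, then n^(m+1) ≼ F_{G,S}(n). -/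
open Function
open scoped ENNReal NNReal

/-- `γ_m(N)` (with `γ_1(N) = N`) as a subgroup of the ambient group. -/
def gammaSub {G : Type*} [Group G] (N : Subgroup G) (m : ℕ) : Subgroup G :=
  ((⊤ : Subgroup ↥N).lowerCentralSeries (m - 1)).map N.subtype

/-- A finitely generated group has infinite Prüfer rank if there is no `r` such that every
finitely generated subgroup can be generated by `r` elements. -/
def InfinitePruferRank (G : Type*) [Group G] : Prop :=
  ¬ ∃ r : ℕ, ∀ H : Subgroup G, H.FG →
    ∃ T : Finset G, T.card ≤ r ∧ Subgroup.closure (T : Set G) = H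

section RFauxSection
open Subgroup
namespace RFaux

/-- lcm of 1..K -/
def rlcm (K : ℕ) : ℕ := (Finset.Icc 1 K).lcm id

lemma rlcm_ne_zero (K : ℕ) : rlcm K ≠ 0 := by
  unfold rlcm
  intro h
  rw [Finset.lcm_eq_zero_iff] at h
  obtain ⟨a, ha, ha0⟩ := h
  simp only [id] at ha0
  subst ha0
  simp [Finset.mem_Icc] at ha

lemma dvd_rlcm {d K : ℕ} (h1 : 1 ≤ d) (h2 : d ≤ K) : d ∣ rlcm K :=
  Finset.dvd_lcm (Finset.mem_Icc.mpr ⟨h1, h2⟩)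

lemma rlcm_zero : rlcm 0 = 1 := by simp [rlcm]

lemma rlcm_dvd_step (n : ℕ) : rlcm n ∣ primorial n * rlcm (n / 2) := by
  apply Finset.lcm_dvd
  intro k hk
  obtain ⟨hk1, hkn⟩ := Finset.mem_Icc.mp hk
  simp only [id]
  have hk0 : (k : ℕ) ≠ 0 := by omega
  have hr0 : primorial n * rlcm (n / 2) ≠ 0 :=
    Nat.mul_ne_zero (primorial_pos n).ne' (rlcm_ne_zero _)
  rw [← Nat.factorization_le_iff_dvd hk0 hr0, Finsupp.le_def]
  intro p
  by_cases hp : p.Prime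
  · by_cases hpk : p ∣ k
    · have hfac : Nat.factorization (primorial n * rlcm (n / 2)) p =
          (primorial n).factorization p + (rlcm (n / 2)).factorization p := by
        rw [Nat.factorization_mul (primorial_pos n).ne' (rlcm_ne_zero _)]; rfl
      rw [hfac]
      have hpn : p ≤ n := le_trans (Nat.le_of_dvd (by omega) hpk) hkn
      have h1 : 1 ≤ (primorial n).factorization p := by
        have hppp : p ∣ primorial n := by
          apply Finset.dvd_prod_of_mem
          simp only [Finset.mem_filter, Finset.mem_range]
          exact ⟨by omega, hp⟩
        exact hp.factorization_pos_of_dvd (primorial_pos n).ne' hppp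
      have ha : k.factorization p - 1 ≤ (rlcm (n / 2)).factorization p := by
        set a := k.factorization p with hadef
        rcases Nat.eq_zero_or_pos a with ha0 | hapos
        · omega
        · have hdvd : p ^ a ∣ k := Nat.ordProj_dvd k p
          have hpa : p ^ a ≤ n := le_trans (Nat.le_of_dvd (by omega) hdvd) hkn
          have h2 : p ^ (a - 1) * 2 ≤ n := by
            calc p ^ (a - 1) * 2 ≤ p ^ (a - 1) * p := by
                  have := hp.two_le; exact Nat.mul_le_mul_left _ this
            _ = p ^ a := by rw [← pow_succ]; congr 1; omega
            _ ≤ n := hpa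
          have h3 : p ^ (a - 1) ≤ n / 2 := Nat.le_div_iff_mul_le (by norm_num) |>.mpr h2
          have h4 : p ^ (a - 1) ∣ rlcm (n / 2) := dvd_rlcm (Nat.one_le_pow _ _ hp.pos) h3
          exact (Nat.Prime.pow_dvd_iff_le_factorization hp (rlcm_ne_zero _)).mp h4
      omega
    · rw [Nat.factorization_eq_zero_of_not_dvd hpk]
      exact Nat.zero_le _
  · rw [Nat.factorization_eq_zero_of_not_prime _ hp]
    exact Nat.zero_le _

lemma rlcm_le (n : ℕ) : rlcm n ≤ 16 ^ n := by
  induction n using Nat.strong_induction_on with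
  | _ n ih =>
    rcases Nat.eq_zero_or_pos n with rfl | hn
    · simp [rlcm_zero]
    · have h1 : rlcm n ≤ primorial n * rlcm (n / 2) :=
        Nat.le_of_dvd (Nat.pos_of_ne_zero (Nat.mul_ne_zero (primorial_pos n).ne'
          (rlcm_ne_zero _))) (rlcm_dvd_step n)
      have h2 : rlcm (n / 2) ≤ 16 ^ (n / 2) := ih _ (Nat.div_lt_self hn (by norm_num))
      calc rlcm n ≤ primorial n * rlcm (n / 2) := h1
        _ ≤ 4 ^ n * 16 ^ (n / 2) := Nat.mul_le_mul (primorial_le_4_pow n) h2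
        _ ≤ 4 ^ n * 4 ^ n := by
              have h3 : (16:ℕ) ^ (n / 2) = 4 ^ (2 * (n / 2)) := by
                rw [pow_mul]; norm_num
              have h4 : (4:ℕ) ^ (2 * (n / 2)) ≤ 4 ^ n :=
                Nat.pow_le_pow_right (by norm_num) (by omega)
              exact Nat.mul_le_mul_left _ (h3 ▸ h4)
        _ = 16 ^ n := by rw [← Nat.mul_pow]

end RFaux

namespace RFaux2

variable {P : Type*} [Group P]

lemma lcs_stab {i : ℕ} (hnil : Group.IsNilpotent P)
    (h : (⊤ : Subgroup P).lowerCentralSeries (i+1) = (⊤ : Subgroup P).lowerCentralSeries i) :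
    (⊤ : Subgroup P).lowerCentralSeries i = ⊥ := by
  obtain ⟨nc, hnc⟩ := Subgroup.nilpotent_iff_lowerCentralSeries.mp hnil
  have key : ∀ k, (⊤ : Subgroup P).lowerCentralSeries (i + k) = (⊤ : Subgroup P).lowerCentralSeries i := by
    intro k
    induction k with
    | zero => rfl
    | succ k ih =>
      have h2 : (⊤ : Subgroup P).lowerCentralSeries (i + (k+1)) = ⁅(⊤ : Subgroup P).lowerCentralSeries (i+k), ⊤⁆ := rfl
      rw [h2, ih]
      exact h
  rcases le_total nc i with hle | hle
  · exact le_bot_iff.mp (hnc ▸ Subgroup.lowerCentralSeries_antitone (⊤ : Subgroup P) hle)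
  · have h3 := key (nc - i)
    rw [Nat.add_sub_cancel' hle] at h3
    rw [← h3, hnc]

lemma cyclic_quot_collapse (hnil : Group.IsNilpotent P)
    (h : IsCyclic (P ⧸ (⊤ : Subgroup P).lowerCentralSeries 1)) :
    (⊤ : Subgroup P).lowerCentralSeries 1 = ⊥ := by
  set N2 := (⊤ : Subgroup P).lowerCentralSeries 2 with hN2
  let π := QuotientGroup.mk' N2
  have hπsurj : Surjective π := QuotientGroup.mk'_surjective N2
  have hmapγ2 : N2.map π = ⊥ := by
    rw [eq_bot_iff]
    rintro q ⟨u, hu, rfl⟩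
    simpa [π, Subgroup.mem_bot] using (QuotientGroup.eq_one_iff u).mpr hu
  have hcomm : ⁅((⊤ : Subgroup P).lowerCentralSeries 1).map π, (⊤ : Subgroup (P ⧸ N2))⁆ = ⊥ := by
    rw [← Subgroup.map_top_of_surjective π hπsurj, ← Subgroup.map_commutator]
    exact hmapγ2
  have hcentral : ∀ c ∈ ((⊤ : Subgroup P).lowerCentralSeries 1).map π, ∀ g : P ⧸ N2, c * g = g * c := by
    have hle := Subgroup.commutator_eq_bot_iff_le_centralizer.mp hcomm
    intro c hc g
    have hmem := hle hc
    rw [Subgroup.mem_centralizer_iff] at hmem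
    exact (hmem g (by simp)).symm
  obtain ⟨xbar, hxbar⟩ := h.exists_generator
  obtain ⟨x, hx⟩ := QuotientGroup.mk'_surjective ((⊤ : Subgroup P).lowerCentralSeries 1) xbar
  have hdecomp : ∀ u : P, ∃ k : ℤ, (x ^ k)⁻¹ * u ∈ (⊤ : Subgroup P).lowerCentralSeries 1 := by
    intro u
    obtain ⟨k, hk⟩ := Subgroup.mem_zpowers_iff.mp (hxbar (QuotientGroup.mk' _ u))
    refine ⟨k, ?_⟩
    have h5 : QuotientGroup.mk' ((⊤ : Subgroup P).lowerCentralSeries 1) (x ^ k) =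
        QuotientGroup.mk' ((⊤ : Subgroup P).lowerCentralSeries 1) u := by
      rw [map_zpow, hx, hk]
    rw [QuotientGroup.mk'_eq_mk'] at h5
    have h6 := h5
    obtain ⟨z, hz, hzz⟩ := h6
    have : (x ^ k)⁻¹ * u = z := by rw [← hzz]; group
    rw [this]; exact hz
  have habelian : ∀ q r : P ⧸ N2, q * r = r * q := by
    intro q r
    obtain ⟨u, rfl⟩ := hπsurj q
    obtain ⟨v, rfl⟩ := hπsurj r
    obtain ⟨k, hk⟩ := hdecomp u
    obtain ⟨l, hl⟩ := hdecomp v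
    have hu : u = x ^ k * ((x ^ k)⁻¹ * u) := by group
    have hv : v = x ^ l * ((x ^ l)⁻¹ * v) := by group
    have hc' : π ((x ^ k)⁻¹ * u) ∈ ((⊤ : Subgroup P).lowerCentralSeries 1).map π := ⟨_, hk, rfl⟩
    have hd' : π ((x ^ l)⁻¹ * v) ∈ ((⊤ : Subgroup P).lowerCentralSeries 1).map π := ⟨_, hl, rfl⟩
    rw [hu, hv]
    simp only [map_mul, map_zpow]
    have hcom : Commute (π x ^ k * π ((x ^ k)⁻¹ * u)) (π x ^ l * π ((x ^ l)⁻¹ * v)) := by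
      apply Commute.mul_left
      · apply Commute.mul_right
        · exact (Commute.refl (π x)).zpow_zpow k l
        · have hcd : Commute (π ((x ^ l)⁻¹ * v)) (π x ^ k) := hcentral _ hd' _
          exact hcd.symm
      · have hcc : Commute (π ((x ^ k)⁻¹ * u)) (π x ^ l * π ((x ^ l)⁻¹ * v)) := hcentral _ hc' _
        exact hcc
    exact hcom
  have hle12 : (⊤ : Subgroup P).lowerCentralSeries 1 ≤ (⊤ : Subgroup P).lowerCentralSeries 2 := by
    have hQ : ⁅(⊤ : Subgroup (P ⧸ N2)), (⊤ : Subgroup (P ⧸ N2))⁆ = ⊥ := by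
      rw [Subgroup.commutator_eq_bot_iff_le_centralizer]
      intro g _
      rw [Subgroup.mem_centralizer_iff]
      intro hh _
      exact habelian hh g
    have hmap : ((⊤ : Subgroup P).lowerCentralSeries 1).map π ≤ ⊥ := by
      have h7 : ((⊤ : Subgroup P).lowerCentralSeries 1).map π ≤ (⊤ : Subgroup (P ⧸ N2)).lowerCentralSeries 1 :=
        Subgroup.lowerCentralSeries.map π 1
      have h8 : (⊤ : Subgroup (P ⧸ N2)).lowerCentralSeries 1 = ⊥ := by
        have : (⊤ : Subgroup (P ⧸ N2)).lowerCentralSeries 1 = ⁅(⊤ : Subgroup (P ⧸ N2)), ⊤⁆ := by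
          rw [Subgroup.top_lowerCentralSeries_one]; rfl
        rw [this, hQ]
      rw [← h8]; exact h7
    intro u hu
    have h9 : π u ∈ (⊥ : Subgroup (P ⧸ N2)) := hmap ⟨u, hu, rfl⟩
    rw [Subgroup.mem_bot] at h9
    exact (QuotientGroup.eq_one_iff u).mp h9
  exact lcs_stab hnil (le_antisymm (Subgroup.lowerCentralSeries_antitone (⊤ : Subgroup P) (by omega)) hle12)

end RFaux2

namespace RFaux3
open RFaux2

lemma pgroup_lcs_card_le {P : Type*} [Group P] [Finite P] {p : ℕ} (hp : p.Prime)
    (hPG : IsPGroup p P) {n a : ℕ} (hn : 1 ≤ n) {z : P}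
    (hz : z ∈ (⊤ : Subgroup P).lowerCentralSeries n) (hza : orderOf z = p ^ a) (ha : 1 ≤ a) :
    p ^ (a + n + 1) ≤ Nat.card P := by
  haveI := Fact.mk hp
  have hnil : Group.IsNilpotent P := hPG.isNilpotent
  have hz1 : z ≠ 1 := by
    intro h
    rw [h, orderOf_one] at hza
    have h2 : 1 < p ^ a := Nat.one_lt_pow (by omega) hp.one_lt
    omega
  have hbot : ∀ i, i ≤ n → (⊤ : Subgroup P).lowerCentralSeries i ≠ ⊥ := by
    intro i hi hcontra
    have h2 : z ∈ (⊤ : Subgroup P).lowerCentralSeries i := Subgroup.lowerCentralSeries_antitone (⊤ : Subgroup P) hi hz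
    rw [hcontra, Subgroup.mem_bot] at h2
    exact hz1 h2
  -- card of gamma n
  have hcardn : p ^ a ≤ Nat.card ((⊤ : Subgroup P).lowerCentralSeries n) := by
    have h2 : Subgroup.zpowers z ≤ (⊤ : Subgroup P).lowerCentralSeries n := by
      rw [Subgroup.zpowers_le]; exact hz
    calc p ^ a = Nat.card (Subgroup.zpowers z) := by rw [Nat.card_zpowers, hza]
    _ ≤ Nat.card ((⊤ : Subgroup P).lowerCentralSeries n) := Subgroup.card_le_of_le h2
  -- step lemma
  have hstep : ∀ i, 1 ≤ i → i < n →
      p * Nat.card ((⊤ : Subgroup P).lowerCentralSeries (i+1)) ≤ Nat.card ((⊤ : Subgroup P).lowerCentralSeries i) := by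
    intro i hi1 hin
    have hle : (⊤ : Subgroup P).lowerCentralSeries (i+1) ≤ (⊤ : Subgroup P).lowerCentralSeries i :=
      Subgroup.lowerCentralSeries_antitone (⊤ : Subgroup P) (by omega)
    have hne : (⊤ : Subgroup P).lowerCentralSeries (i+1) ≠ (⊤ : Subgroup P).lowerCentralSeries i := by
      intro hcontra
      exact hbot i (by omega) (lcs_stab hnil hcontra)
    obtain ⟨k1, hk1⟩ := IsPGroup.iff_card.mp (hPG.to_subgroup ((⊤ : Subgroup P).lowerCentralSeries (i+1)))
    obtain ⟨k2, hk2⟩ := IsPGroup.iff_card.mp (hPG.to_subgroup ((⊤ : Subgroup P).lowerCentralSeries i))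
    have hdvd : Nat.card ((⊤ : Subgroup P).lowerCentralSeries (i+1)) ∣ Nat.card ((⊤ : Subgroup P).lowerCentralSeries i) :=
      Subgroup.card_dvd_of_le hle
    rw [hk1, hk2] at hdvd
    have hkle : k1 ≤ k2 := (Nat.pow_dvd_pow_iff_le_right hp.one_lt).mp hdvd
    have hklt : k1 < k2 := by
      rcases Nat.lt_or_ge k1 k2 with h | h
      · exact h
      · exfalso
        have hkeq : k1 = k2 := by omega
        have hcardeq : Nat.card ((⊤ : Subgroup P).lowerCentralSeries i) ≤
            Nat.card ((⊤ : Subgroup P).lowerCentralSeries (i+1)) := by rw [hk1, hk2, hkeq]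
        exact hne (Subgroup.eq_of_le_of_card_ge hle hcardeq)
    rw [hk1, hk2]
    calc p * p ^ k1 = p ^ (k1 + 1) := by ring
    _ ≤ p ^ k2 := Nat.pow_le_pow_right hp.pos (by omega)
  -- gamma 1 card
  have hcard1 : p ^ (n - 1) * p ^ a ≤ Nat.card ((⊤ : Subgroup P).lowerCentralSeries 1) := by
    have key : ∀ j, j ≤ n - 1 → p ^ j * p ^ a ≤ Nat.card ((⊤ : Subgroup P).lowerCentralSeries (n - j)) := by
      intro j
      induction j with
      | zero => intro _; simpa using hcardn
      | succ j ih =>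
        intro hj
        have hij : n - (j + 1) + 1 = n - j := by omega
        have h2 := hstep (n - (j+1)) (by omega) (by omega)
        rw [hij] at h2
        calc p ^ (j+1) * p ^ a = p * (p ^ j * p ^ a) := by ring
        _ ≤ p * Nat.card ((⊤ : Subgroup P).lowerCentralSeries (n - j)) :=
            Nat.mul_le_mul_left _ (ih (by omega))
        _ ≤ Nat.card ((⊤ : Subgroup P).lowerCentralSeries (n - (j+1))) := h2
    have := key (n - 1) (le_refl _)
    simpa [Nat.sub_sub_self hn] using this
  -- quotient is not cyclic
  have hnotcyc : ¬ IsCyclic (P ⧸ (⊤ : Subgroup P).lowerCentralSeries 1) := by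
    intro hcyc
    have h2 := cyclic_quot_collapse hnil hcyc
    exact hbot 1 hn h2
  obtain ⟨k, hk⟩ := IsPGroup.iff_card.mp (hPG.to_quotient ((⊤ : Subgroup P).lowerCentralSeries 1))
  have hk2 : 2 ≤ k := by
    by_contra hcon
    push_neg at hcon
    interval_cases k
    · have : Nat.card (P ⧸ (⊤ : Subgroup P).lowerCentralSeries 1) = 1 := by simpa using hk
      have hsub : Subsingleton (P ⧸ (⊤ : Subgroup P).lowerCentralSeries 1) :=
        Nat.card_eq_one_iff_unique.mp this |>.1
      exact hnotcyc (by infer_instance)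
    · have : Nat.card (P ⧸ (⊤ : Subgroup P).lowerCentralSeries 1) = p := by simpa using hk
      exact hnotcyc (isCyclic_of_prime_card this)
  have hfinal : Nat.card P = Nat.card ((⊤ : Subgroup P).lowerCentralSeries 1) *
      Nat.card (P ⧸ (⊤ : Subgroup P).lowerCentralSeries 1) := by
    rw [← Subgroup.card_mul_index ((⊤ : Subgroup P).lowerCentralSeries 1), Subgroup.index_eq_card]
  calc p ^ (a + n + 1) = (p ^ (n-1) * p ^ a) * p ^ 2 := by
        rw [← pow_add, ← pow_add]; congr 1; omega
  _ ≤ Nat.card ((⊤ : Subgroup P).lowerCentralSeries 1) * p ^ k :=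
      Nat.mul_le_mul hcard1 (Nat.pow_le_pow_right hp.pos hk2)
  _ = Nat.card P := by rw [hfinal, hk]

end RFaux3

namespace RFaux4
open RFaux2 RFaux3

lemma nilpotent_lcs_card_le :
    ∀ (c : ℕ) (M : Type) (_ : Group M) (_ : Finite M), Nat.card M = c →
    Group.IsNilpotent M → ∀ {p : ℕ}, p.Prime → ∀ {n a : ℕ}, 1 ≤ n → ∀ z : M,
    z ∈ (⊤ : Subgroup M).lowerCentralSeries n → orderOf z = p ^ a → 1 ≤ a →
    p ^ (a + n + 1) ≤ Nat.card M := by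
  intro c
  induction c using Nat.strong_induction_on with
  | _ c ih =>
    intro M _ _ hc hnil p hp n a hn z hz hza ha
    haveI := Fact.mk hp
    subst hc
    by_cases hPG : IsPGroup p M
    · exact pgroup_lcs_card_le hp hPG hn hz hza ha
    · have hc0 : Nat.card M ≠ 0 := Nat.card_pos.ne'
      set c0 := Nat.card M with hc0def
      have hocne : c0 / p ^ c0.factorization p ≠ 1 := by
        intro hcon
        apply hPG
        rw [IsPGroup.iff_card (p := p)]
        refine ⟨c0.factorization p, ?_⟩
        have h2 := Nat.ordProj_mul_ordCompl_eq_self c0 p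
        rw [hcon, mul_one] at h2
        exact h2.symm
      obtain ⟨q, hq, hqdvd⟩ := Nat.exists_prime_and_dvd hocne
      have hqdvdc : q ∣ c0 := hqdvd.trans (Nat.ordCompl_dvd c0 p)
      have hqp : q ≠ p := by
        intro hcon
        subst hcon
        exact Nat.not_dvd_ordCompl hq hc0 hqdvd
      haveI := Fact.mk hq
      obtain ⟨P'⟩ : Nonempty (Sylow q M) := Sylow.nonempty
      have hnormal : (P' : Subgroup M).Normal := by
        have htfae := (isNilpotent_of_finite_tfae (G := M)).out 0 3
        exact htfae.mp hnil q (Fact.mk hq) P'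
      have hcardP : Nat.card (P' : Subgroup M) = q ^ c0.factorization q :=
        P'.card_eq_multiplicity
      have hPbig : 2 ≤ Nat.card (P' : Subgroup M) := by
        rw [hcardP]
        have h1 : 1 ≤ c0.factorization q := hq.factorization_pos_of_dvd hc0 hqdvdc
        calc 2 ≤ q := hq.two_le
        _ = q ^ 1 := (pow_one q).symm
        _ ≤ q ^ c0.factorization q := Nat.pow_le_pow_right hq.pos h1
      haveI : (P' : Subgroup M).Normal := hnormal
      haveI : Group.IsNilpotent M := hnil
      set M' := M ⧸ (P' : Subgroup M) with hM'def
      have hprod : Nat.card M = Nat.card M' * Nat.card (P' : Subgroup M) :=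
        Subgroup.card_eq_card_quotient_mul_card_subgroup _
      have hM'pos : 1 ≤ Nat.card M' := Nat.card_pos
      have hlt : Nat.card M' < c0 := by
        calc Nat.card M' < Nat.card M' * 2 := by omega
        _ ≤ Nat.card M' * Nat.card (P' : Subgroup M) := Nat.mul_le_mul_left _ hPbig
        _ = c0 := hprod.symm
      set π := QuotientGroup.mk' (P' : Subgroup M) with hπdef
      set zb := π z with hzbdef
      have hzb : zb ∈ (⊤ : Subgroup M').lowerCentralSeries n :=
        Subgroup.lowerCentralSeries.map π n ⟨z, hz, rfl⟩
      have hzborder : orderOf zb = p ^ a := by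
        have hdvd : orderOf zb ∣ p ^ a := hza ▸ orderOf_map_dvd π z
        have hne : zb ^ p ^ (a - 1) ≠ 1 := by
          intro hcon
          have hmem : z ^ p ^ (a - 1) ∈ (P' : Subgroup M) := by
            rw [← QuotientGroup.eq_one_iff]
            rw [hzbdef] at hcon
            simpa [π] using hcon
          have how : orderOf (z ^ p ^ (a - 1)) = p := by
            rw [orderOf_pow, hza]
            have hgcd : Nat.gcd (p ^ a) (p ^ (a - 1)) = p ^ (a - 1) :=
              Nat.gcd_eq_right (pow_dvd_pow p (by omega))
            rw [hgcd, Nat.pow_div (by omega) hp.pos]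
            have h4 : a - (a - 1) = 1 := by omega
            rw [h4, pow_one]
          have hdvd2 : orderOf (⟨z ^ p ^ (a - 1), hmem⟩ : (P' : Subgroup M)) ∣
              Nat.card (P' : Subgroup M) := orderOf_dvd_natCard _
          have h3 := orderOf_injective (P' : Subgroup M).subtype
            (Subgroup.subtype_injective _) ⟨z ^ p ^ (a - 1), hmem⟩
          rw [show ((P' : Subgroup M).subtype ⟨z ^ p ^ (a - 1), hmem⟩) = z ^ p ^ (a - 1)
            from rfl] at h3
          have h2 : orderOf (⟨z ^ p ^ (a - 1), hmem⟩ : (P' : Subgroup M)) = p :=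
            h3.symm.trans how
          rw [h2, hcardP] at hdvd2
          have : p = q := by
            have := hp.dvd_of_dvd_pow hdvd2
            exact (Nat.prime_dvd_prime_iff_eq hp hq).mp this
          exact hqp this.symm
        have hfin : zb ^ p ^ (a - 1 + 1) = 1 := by
          have h2 : a - 1 + 1 = a := by omega
          rw [h2, hzbdef, ← map_pow, ← hza, pow_orderOf_eq_one, map_one]
        have := orderOf_eq_prime_pow hne hfin
        rw [this]
        congr 1
        omega
      have hIH := ih (Nat.card M') hlt M' inferInstance inferInstance rfl
        inferInstance hp hn zb hzb hzborder ha
      calc p ^ (a + n + 1) ≤ Nat.card M' := hIH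
      _ ≤ c0 := by omega

end RFaux4

end RFauxSection

/-- a residually finite, finitely generated solvable group of infinite Prüfer rank
with a nontrivial infinite-order strictly `f`-distorted element `x ∈ Fitt(G)`, where
`2^n ≼ f(n) ≼ 2^(2^n)`, satisfies `n ≼ F_{G,S}(n)`; moreover if `x` has nilpotent depth `m > 1`
then `n^(m+1) ≼ F_{G,S}(n)`. -/
theorem infinite_prufer_rank_lower_bound {G : Type*} [Group G] (S : Finset G)
    (hgen : Subgroup.closure (S : Set G) = ⊤)
    (hRF : ResiduallyFinite G) (hsolv : IsSolvable G)
    (hrank : InfinitePruferRank G)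
    (f : ℕ → ℕ) (hmono : Monotone f)
    (hlow : ∃ C : ℕ, 0 < C ∧ ∀ n : ℕ, 2 ^ n ≤ C * f (C * n))
    (hup : ∃ C : ℕ, 0 < C ∧ ∀ n : ℕ, f n ≤ C * 2 ^ 2 ^ (C * n))
    (x : G) (hx : x ≠ 1) (hord : ¬ IsOfFinOrder x) (hxFitt : x ∈ fitt G)
    (hdist : StrictlyDistorted S f x) :
    (∃ C : ℕ, 0 < C ∧ ∀ n : ℕ, (n : ℕ∞) ≤ (C : ℕ∞) * rfGrowth S (C * n)) ∧
    (∀ m : ℕ, 1 < m →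
      (∃ N : Subgroup G, N.Normal ∧ Group.IsNilpotent N ∧
        Subgroup.zpowers x ⊓ gammaSub N m ≠ ⊥) →
      ∃ C : ℕ, 0 < C ∧ ∀ n : ℕ, (n : ℕ∞) ^ (m + 1) ≤ (C : ℕ∞) * rfGrowth S (C * n)) := by
  classical
  obtain ⟨C, hCpos, hlowC⟩ := hlow
  obtain ⟨C₁, C₂, hC₁, hC₂, hdd⟩ := hdist
  -- word-length bound for powers of x
  have hlen : ∀ e₀ s : ℕ, 0 < e₀ → ∃ A : ℕ, 0 < A ∧ ∀ K : ℕ, 1 ≤ K →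
      wordLength S (x ^ ((e₀ * RFaux.rlcm K ^ s : ℕ) : ℤ)) ≤ A * K := by
    intro e₀ s he₀
    obtain ⟨B, hC₂B⟩ : ∃ B : ℕ, C₂ ≤ (B : ℝ) := ⟨⌈C₂⌉₊, Nat.le_ceil C₂⟩
    refine ⟨C * (C * B * e₀ + 4 * s + 1), by positivity, ?_⟩
    intro K hK
    set t := e₀ * RFaux.rlcm K ^ s with ht
    have ht0 : t ≠ 0 := Nat.mul_ne_zero (by omega) (pow_ne_zero _ (RFaux.rlcm_ne_zero K))
    set w := wordLength S (x ^ ((t : ℕ) : ℤ)) with hw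
    have hub : (f w : ℝ) ≤ C₂ * |((t : ℤ) : ℝ)| := (hdd (t : ℤ) (by exact_mod_cast ht0)).2
    have habs : |((t : ℤ) : ℝ)| = (t : ℝ) := by
      rw [Int.cast_natCast]; exact abs_of_nonneg (by positivity)
    have hub2 : f w ≤ B * t := by
      have h3 : (f w : ℝ) ≤ ((B * t : ℕ) : ℝ) := by
        rw [habs] at hub
        rw [Nat.cast_mul]
        calc (f w : ℝ) ≤ C₂ * t := hub
        _ ≤ (B : ℝ) * t := by
            apply mul_le_mul_of_nonneg_right hC₂B (by positivity)
      exact_mod_cast h3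
    set j := w / C with hj
    have hjle : C * j ≤ w := by
      rw [hj, Nat.mul_comm]
      exact Nat.div_mul_le_self w C
    have h2j : 2 ^ j ≤ C * (B * t) :=
      (hlowC j).trans (Nat.mul_le_mul_left C ((hmono hjle).trans hub2))
    have ht16 : t ≤ e₀ * 16 ^ (s * K) := by
      have h1 : RFaux.rlcm K ≤ 16 ^ K := RFaux.rlcm_le K
      have h2 : RFaux.rlcm K ^ s ≤ (16 ^ K) ^ s := Nat.pow_le_pow_left h1 s
      rw [← pow_mul] at h2
      calc t = e₀ * RFaux.rlcm K ^ s := rfl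
      _ ≤ e₀ * 16 ^ (K * s) := Nat.mul_le_mul_left _ h2
      _ = e₀ * 16 ^ (s * K) := by rw [Nat.mul_comm K s]
    have h16 : (16 : ℕ) ^ (s * K) = 2 ^ (4 * (s * K)) := by
      rw [show (16 : ℕ) = 2 ^ 4 by norm_num, ← pow_mul]
    have hfin2 : 2 ^ j ≤ 2 ^ (C * B * e₀ + 4 * (s * K)) := by
      calc 2 ^ j ≤ C * (B * t) := h2j
      _ ≤ C * (B * (e₀ * 16 ^ (s * K))) := by
          exact Nat.mul_le_mul_left _ (Nat.mul_le_mul_left _ ht16)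
      _ = (C * B * e₀) * 16 ^ (s * K) := by ring
      _ ≤ 2 ^ (C * B * e₀) * 16 ^ (s * K) :=
          Nat.mul_le_mul_right _ (Nat.le_of_lt Nat.lt_two_pow_self)
      _ = 2 ^ (C * B * e₀) * 2 ^ (4 * (s * K)) := by rw [h16]
      _ = 2 ^ (C * B * e₀ + 4 * (s * K)) := by rw [← pow_add]
    have hjle2 : j ≤ C * B * e₀ + 4 * (s * K) :=
      (Nat.pow_le_pow_iff_right (by norm_num)).mp hfin2
    have hwlt : w < C * (j + 1) := by
      have h4 := Nat.div_add_mod w C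
      rw [← hj] at h4
      have hmod := Nat.mod_lt w hCpos
      have h5 : C * (j + 1) = C * j + C := by ring
      omega
    have hw2 : w ≤ C * (C * B * e₀ + 4 * (s * K) + 1) :=
      le_trans (Nat.le_of_lt hwlt) (Nat.mul_le_mul_left C (by omega))
    have hDK : C * B * e₀ ≤ C * B * e₀ * K := Nat.le_mul_of_pos_right _ (by omega)
    have hfinal : C * (C * B * e₀ + 4 * (s * K) + 1) ≤ C * (C * B * e₀ + 4 * s + 1) * K := by
      have h3 : C * (C * B * e₀ + 4 * s + 1) * K
          = C * (C * B * e₀ * K + 4 * (s * K) + K) := by ring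
      rw [h3]
      apply Nat.mul_le_mul_left C
      omega
    exact hw2.trans hfinal
  -- rfGrowth basic facts
  have hrf_ge : ∀ (g : G) (nn : ℕ), g ≠ 1 → wordLength S g ≤ nn → depth g ≤ rfGrowth S nn :=
    fun g nn h1 h2 => le_sSup ⟨g, h1, h2, rfl⟩
  have hdepth_ge : ∀ (g : G) (D : ℕ), (∀ (Ht : Type) [instG : Group Ht] [instF : Fintype Ht]
      (φ : G →* Ht), φ g ≠ 1 → D ≤ Fintype.card Ht) → (D : ℕ∞) ≤ depth g := by
    intro g D hall
    apply le_sInf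
    rintro b ⟨Ht, instG, instF, φ, hsurj, hne, rfl⟩
    exact Nat.cast_le.mpr (@hall Ht instG instF φ hne)
  have hpow_ne : ∀ t : ℕ, t ≠ 0 → x ^ ((t : ℕ) : ℤ) ≠ 1 := by
    intro t ht hcon
    apply hord
    rw [zpow_natCast] at hcon
    exact isOfFinOrder_iff_pow_eq_one.mpr ⟨t, Nat.pos_of_ne_zero ht, hcon⟩
  constructor
  · -- Part 1
    obtain ⟨A, hApos, hAbound⟩ := hlen 1 1 one_pos
    refine ⟨A, hApos, ?_⟩
    intro n
    rcases Nat.eq_zero_or_pos n with rfl | hn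
    · simp
    · have hg1 : x ^ ((RFaux.rlcm n : ℕ) : ℤ) ≠ 1 := hpow_ne _ (RFaux.rlcm_ne_zero n)
      have hglen : wordLength S (x ^ ((RFaux.rlcm n : ℕ) : ℤ)) ≤ A * n := by
        have h2 := hAbound n hn
        simpa using h2
      have hdepth : ((n + 1 : ℕ) : ℕ∞) ≤ depth (x ^ ((RFaux.rlcm n : ℕ) : ℤ)) := by
        apply hdepth_ge
        intro Ht instG instF φ hne
        by_contra hcon
        push_neg at hcon
        apply hne
        have hcard1 : 0 < Fintype.card Ht := Fintype.card_pos
        have hd1 : orderOf (φ x) ∣ RFaux.rlcm n := by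
          apply RFaux.dvd_rlcm
          · exact orderOf_pos (φ x)
          · calc orderOf (φ x) ≤ Fintype.card Ht :=
                Nat.le_of_dvd hcard1 (orderOf_dvd_card)
            _ ≤ n := by omega
        have h5 : (φ x) ^ (RFaux.rlcm n) = 1 := orderOf_dvd_iff_pow_eq_one.mp hd1
        rw [map_zpow, zpow_natCast, h5]
      have hA1 : (1 : ℕ∞) ≤ (A : ℕ∞) := by
        exact_mod_cast Nat.one_le_cast.mpr hApos
      calc (n : ℕ∞) ≤ ((n + 1 : ℕ) : ℕ∞) := Nat.cast_le.mpr (by omega)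
      _ ≤ depth (x ^ ((RFaux.rlcm n : ℕ) : ℤ)) := hdepth
      _ ≤ rfGrowth S (A * n) := hrf_ge _ (A * n) hg1 hglen
      _ = 1 * rfGrowth S (A * n) := (one_mul _).symm
      _ ≤ (A : ℕ∞) * rfGrowth S (A * n) := mul_le_mul' hA1 le_rfl
  · -- Part 2
    rintro m hm ⟨N, hNnorm, hNnil, hNne⟩
    obtain ⟨w0, hw0mem, hw0ne⟩ := (Subgroup.bot_or_exists_ne_one _).resolve_left hNne
    rw [Subgroup.mem_inf] at hw0mem
    obtain ⟨tz, htz⟩ := Subgroup.mem_zpowers_iff.mp hw0mem.1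
    have htz0 : tz ≠ 0 := by
      rintro rfl
      simp only [zpow_zero] at htz
      exact hw0ne htz.symm
    set e₀ := tz.natAbs with he₀
    have he₀pos : 0 < e₀ := Int.natAbs_pos.mpr htz0
    have hyγ : x ^ ((e₀ : ℕ) : ℤ) ∈ gammaSub N m := by
      rcases Int.natAbs_eq tz with h | h
      · rw [← h, htz]; exact hw0mem.2
      · have h2 : ((e₀ : ℕ) : ℤ) = -tz := by omega
        rw [h2, zpow_neg, htz]
        exact inv_mem hw0mem.2
    set y := x ^ ((e₀ : ℕ) : ℤ) with hy
    have hyN : y ∈ N := Subgroup.map_subtype_le _ hyγ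
    haveI : Group.IsNilpotent ↥N := hNnil
    obtain ⟨A, hApos, hAbound⟩ := hlen e₀ (2 * m + 1) he₀pos
    refine ⟨A, hApos, ?_⟩
    intro n
    rcases Nat.eq_zero_or_pos n with rfl | hn
    · simp
    · have hL0 : RFaux.rlcm n ^ (2 * m + 1) ≠ 0 :=
        pow_ne_zero _ (RFaux.rlcm_ne_zero n)
      set L := RFaux.rlcm n ^ (2 * m + 1) with hL
      have ht0 : e₀ * L ≠ 0 := Nat.mul_ne_zero (by omega) hL0
      have hg1 : x ^ ((e₀ * L : ℕ) : ℤ) ≠ 1 := hpow_ne _ ht0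
      have hglen : wordLength S (x ^ ((e₀ * L : ℕ) : ℤ)) ≤ A * n := hAbound n hn
      have hgy : x ^ ((e₀ * L : ℕ) : ℤ) = y ^ L := by
        rw [hy]
        have h1 : ((e₀ * L : ℕ) : ℤ) = ((e₀ : ℕ) : ℤ) * ((L : ℕ) : ℤ) := by push_cast; ring
        rw [h1, zpow_mul, zpow_natCast]
      have hdepth : (((n + 1) ^ (m + 1) : ℕ) : ℕ∞) ≤ depth (x ^ ((e₀ * L : ℕ) : ℤ)) := by
        apply hdepth_ge
        intro Ht instG instF φ hφne
        have hφyL : (φ y) ^ L ≠ 1 := by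
          intro hcon
          apply hφne
          rw [hgy, map_pow, hcon]
        set Nb := N.map φ with hNb
        haveI hNbnil : Group.IsNilpotent ↥Nb :=
          nilpotent_of_surjective (φ.subgroupMap N) (φ.subgroupMap_surjective N)
        obtain ⟨y₀, hy₀mem, hy₀eq⟩ := Subgroup.mem_map.mp hyγ
        set yb := φ.subgroupMap N y₀ with hyb
        have hybmem : yb ∈ (⊤ : Subgroup ↥Nb).lowerCentralSeries (m - 1) :=
          lowerCentralSeries.map (φ.subgroupMap N) (m - 1) ⟨y₀, hy₀mem, rfl⟩
        have hybcoe : (yb : Ht) = φ y := by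
          have h2 : (yb : Ht) = φ ((y₀ : ↥N) : G) := rfl
          rw [h2]
          exact congrArg φ hy₀eq
        have hybL : yb ^ L ≠ 1 := by
          intro hcon
          apply hφyL
          have h2 : ((yb ^ L : ↥Nb) : Ht) = 1 := by rw [hcon]; rfl
          rw [SubmonoidClass.coe_pow, hybcoe] at h2
          exact h2
        have hd0 : orderOf yb ≠ 0 := (orderOf_pos yb).ne'
        set d := orderOf yb with hd
        have hdnd : ¬ d ∣ L := fun hcon => hybL (orderOf_dvd_iff_pow_eq_one.mp hcon)
        have hex : ∃ p, L.factorization p < d.factorization p := by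
          by_contra hcon
          push_neg at hcon
          exact hdnd ((Nat.factorization_le_iff_dvd hd0 hL0).mp
            (Finsupp.le_def.mpr fun p => hcon p))
        obtain ⟨p, hpf⟩ := hex
        have hppr : p.Prime := by
          have h1 : d.factorization p ≠ 0 := by omega
          have h2 : p ∈ (d.factorization).support := Finsupp.mem_support_iff.mpr h1
          rw [Nat.support_factorization] at h2
          exact Nat.prime_of_mem_primeFactors h2
        set a := d.factorization p with ha
        have ha1 : 1 ≤ a := by omega
        have hzord : orderOf (yb ^ (d / p ^ a)) = p ^ a := by
          rw [orderOf_pow, ← hd]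
          rw [Nat.gcd_eq_right (Nat.ordCompl_dvd d p)]
          exact Nat.div_div_self (Nat.ordProj_dvd d p) hd0
        have hzmem : yb ^ (d / p ^ a) ∈ (⊤ : Subgroup ↥Nb).lowerCentralSeries (m - 1) :=
          Subgroup.pow_mem _ hybmem _
        have hm1 : 1 ≤ m - 1 := by omega
        have hcard := RFaux4.nilpotent_lcs_card_le (Nat.card ↥Nb) ↥Nb inferInstance
          inferInstance rfl hNbnil hppr hm1 (yb ^ (d / p ^ a)) hzmem hzord ha1
        have hcard2 : p ^ (a + m) ≤ Fintype.card Ht := by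
          have h1 : Nat.card ↥Nb ≤ Nat.card Ht := Subgroup.card_le_card_group _
          have h2 : a + (m - 1) + 1 = a + m := by omega
          rw [h2] at hcard
          calc p ^ (a + m) ≤ Nat.card ↥Nb := hcard
          _ ≤ Nat.card Ht := h1
          _ = Fintype.card Ht := Nat.card_eq_fintype_card
        have hv : L.factorization p = (2 * m + 1) * (RFaux.rlcm n).factorization p := by
          rw [hL, Nat.factorization_pow]
          simp
        have harith : (n + 1) ^ (m + 1) ≤ p ^ (a + m) := by
          rcases le_or_gt p n with hpn | hpn
          · set v := (RFaux.rlcm n).factorization p with hvv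
            have hv1 : 1 ≤ v := hppr.factorization_pos_of_dvd (RFaux.rlcm_ne_zero n)
              (RFaux.dvd_rlcm hppr.pos hpn)
            have hKlt : n + 1 ≤ p ^ (v + 1) := by
              by_contra hcon
              push_neg at hcon
              have h3 : p ^ (v + 1) ∣ RFaux.rlcm n :=
                RFaux.dvd_rlcm (Nat.one_le_pow _ _ hppr.pos) (by omega)
              have h4 := (Nat.Prime.pow_dvd_iff_le_factorization hppr
                (RFaux.rlcm_ne_zero n)).mp h3
              omega
            have h5 : (2 * m + 1) * v + 1 ≤ a := by
              rw [hv] at hpf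
              omega
            have h6 : m * 1 ≤ m * v := Nat.mul_le_mul_left m hv1
            have haa : (v + 1) * (m + 1) ≤ a := by
              have e1 : (v + 1) * (m + 1) = m * v + v + m + 1 := by ring
              have e2 : (2 * m + 1) * v + 1 = m * v + m * v + v + 1 := by ring
              rw [e2] at h5
              rw [e1]
              linarith
            calc (n + 1) ^ (m + 1) ≤ (p ^ (v + 1)) ^ (m + 1) := Nat.pow_le_pow_left hKlt _
            _ = p ^ ((v + 1) * (m + 1)) := by rw [← pow_mul]
            _ ≤ p ^ a := Nat.pow_le_pow_right hppr.pos haa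
            _ ≤ p ^ (a + m) := Nat.pow_le_pow_right hppr.pos (by omega)
          · calc (n + 1) ^ (m + 1) ≤ p ^ (m + 1) := Nat.pow_le_pow_left (by omega) _
            _ ≤ p ^ (a + m) := Nat.pow_le_pow_right hppr.pos (by omega)
        exact harith.trans hcard2
      have hA1 : (1 : ℕ∞) ≤ (A : ℕ∞) := by
        exact_mod_cast Nat.one_le_cast.mpr hApos
      calc (n : ℕ∞) ^ (m + 1) = ((n ^ (m + 1) : ℕ) : ℕ∞) := by push_cast; ring
      _ ≤ (((n + 1) ^ (m + 1) : ℕ) : ℕ∞) :=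
          Nat.cast_le.mpr (Nat.pow_le_pow_left (by omega) _)
      _ ≤ depth (x ^ ((e₀ * L : ℕ) : ℤ)) := hdepth
      _ ≤ rfGrowth S (A * n) := hrf_ge _ (A * n) hg1 hglen
      _ = 1 * rfGrowth S (A * n) := (one_mul _).symm
      _ ≤ (A : ℕ∞) * rfGrowth S (A * n) := mul_le_mul' hA1 le_rfl
end

section
/- Let G be a residually finite, finitely generated solvable group with a nontrivial element x ∈ Fitt(G), and let φ: G → H be a surjective homomorphism onto a finite group with φ(x) ≠ 1. Then there exist a prime number p and a normal subgroup K of H such that φ(x) ∉ K and the Fitting subgroup Fitt(H/K) is a finite p-group. -/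
open Function

/-- In a finite group, if every nilpotent normal subgroup is a `p`-group, then so is the
Fitting subgroup. -/
lemma fitt_isPGroup {Q : Type*} [Group Q] [Finite Q] {p : ℕ}
    (h : ∀ N : Subgroup Q, N.Normal → Group.IsNilpotent N → IsPGroup p N) :
    IsPGroup p (fitt Q) := by
  classical
  have hfin : {N : Subgroup Q | N.Normal ∧ Group.IsNilpotent N}.Finite := Set.toFinite _
  set T : Finset (Subgroup Q) := hfin.toFinset with hT
  have hsup : (T.sup id).Normal ∧ IsPGroup p ↥(T.sup id) := by
    refine Finset.sup_induction (p := fun (M : Subgroup Q) => M.Normal ∧ IsPGroup p ↥M)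
      ⟨inferInstance, IsPGroup.of_bot⟩ ?_ ?_
    · rintro a ⟨ha1, ha2⟩ b ⟨hb1, hb2⟩
      haveI := ha1; haveI := hb1
      exact ⟨inferInstance, ha2.to_sup_of_normal_right hb2⟩
    · intro N hN
      rw [hT, Set.Finite.mem_toFinset] at hN
      exact ⟨hN.1, h N hN.1 hN.2⟩
  have hle : fitt Q ≤ T.sup id := by
    refine iSup_le fun N => iSup_le fun hN => iSup_le fun hnil => ?_
    have : N ∈ T := by rw [hT, Set.Finite.mem_toFinset]; exact ⟨hN, hnil⟩
    exact Finset.le_sup (f := id) this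
  exact hsup.2.to_le hle

/-- if `G` is a residually finite, finitely generated solvable group, `x ∈ Fitt(G)`
is nontrivial, and `φ : G → H` is a surjection onto a finite group with `φ(x) ≠ 1`, then there
are a prime `p` and a normal subgroup `K ⊴ H` with `φ(x) ∉ K` such that `Fitt(H/K)` is a finite
`p`-group. -/
theorem special_p_quotient {G : Type*} [Group G] {H : Type*} [Group H] [Fintype H]
    (hRF : ResiduallyFinite G) (hFG : Group.FG G) (hsolv : IsSolvable G)
    (x : G) (hx : x ≠ 1) (hxFitt : x ∈ fitt G)
    (φ : G →* H) (hsurj : Surjective φ) (hφx : φ x ≠ 1) :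
    ∃ (p : ℕ), p.Prime ∧ ∃ (K : Subgroup H) (_ : K.Normal),
      φ x ∉ K ∧ IsPGroup p (fitt (H ⧸ K)) := by
  classical
  -- choose a maximal normal subgroup K not containing φ x
  set s : Set (Subgroup H) := {K | K.Normal ∧ φ x ∉ K} with hs
  have hbot : (⊥ : Subgroup H) ∈ s := ⟨inferInstance, by simpa using hφx⟩
  obtain ⟨K, hKs, hKmax⟩ :=
    Set.Finite.exists_maximalFor id s (Set.toFinite s) ⟨⊥, hbot⟩
  obtain ⟨hKnormal, hKx⟩ := hKs
  haveI := hKnormal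
  set π : H →* H ⧸ K := QuotientGroup.mk' K with hπ
  have hπsurj : Surjective π := QuotientGroup.mk'_surjective K
  set y : H ⧸ K := π (φ x) with hy
  have hy1 : y ≠ 1 := fun h => hKx ((QuotientGroup.eq_one_iff _).mp h)
  -- every nontrivial normal subgroup of H ⧸ K contains y
  have hmono : ∀ M : Subgroup (H ⧸ K), M.Normal → M ≠ ⊥ → y ∈ M := by
    intro M hM hMbot
    by_contra hyM
    have hKL : K ≤ M.comap π := fun k hk => by
      show π k ∈ M
      have h1 : π k = 1 := (QuotientGroup.eq_one_iff k).mpr hk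
      rw [h1]
      exact M.one_mem
    have hLs : M.comap π ∈ s := ⟨hM.comap π, hyM⟩
    have hKL' : K = M.comap π := le_antisymm hKL (hKmax hLs hKL)
    apply hMbot
    have hM' : M = (M.comap π).map π :=
      (Subgroup.map_comap_eq_self_of_surjective hπsurj M).symm
    rw [hM', ← hKL']
    ext z
    simp only [Subgroup.mem_map, Subgroup.mem_bot]
    constructor
    · rintro ⟨k, hk, rfl⟩
      exact (QuotientGroup.eq_one_iff k).mpr hk
    · rintro rfl
      exact ⟨1, K.one_mem, map_one π⟩
  -- choose a prime p dividing the order of y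
  have hord1 : orderOf y ≠ 1 := by simpa [orderOf_eq_one_iff] using hy1
  obtain ⟨p, hp, hpd⟩ := Nat.exists_prime_and_dvd hord1
  haveI : Fact p.Prime := ⟨hp⟩
  refine ⟨p, hp, K, hKnormal, hKx, ?_⟩
  -- every nilpotent normal subgroup of H ⧸ K is a p-group
  refine fitt_isPGroup ?_
  intro N hN hnil
  haveI := hN
  rcases eq_or_ne N ⊥ with rfl | hNbot
  · exact IsPGroup.of_bot
  rw [IsPGroup.iff_card]
  have hcard0 : Nat.card N ≠ 0 := Nat.card_pos.ne'
  refine ⟨(Nat.card N).primeFactorsList.length,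
    Nat.eq_prime_pow_of_unique_prime_dvd hcard0 ?_⟩
  intro q hq hqd
  haveI : Fact q.Prime := ⟨hq⟩
  -- Cauchy: element of order q in N
  obtain ⟨g, hg⟩ := exists_prime_orderOf_dvd_card' (G := N) q hqd
  -- the subgroup generated by g is a q-group, contained in some Sylow q-subgroup P of N
  have hzp : IsPGroup q (Subgroup.zpowers g) :=
    IsPGroup.of_card (((Nat.card_zpowers g).trans hg).trans (pow_one q).symm)
  obtain ⟨P, hgP⟩ := hzp.exists_le_sylow
  -- since N is nilpotent, P is normal in N, hence characteristic, hence its image is normal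
  have hPnorm : (P : Subgroup N).Normal := by
    have tfae := isNilpotent_of_finite_tfae (G := N)
    have h03 := tfae.out 0 3
    exact h03.mp hnil q ⟨hq⟩ P
  haveI : (P : Subgroup N).Characteristic := P.characteristic_of_normal hPnorm
  set N' : Subgroup (H ⧸ K) := (P : Subgroup N).map N.subtype with hN'
  haveI hN'norm : N'.Normal := ConjAct.normal_of_characteristic_of_normal
  -- N' is nontrivial since it contains g ≠ 1
  have hg1 : g ≠ 1 := by
    intro h
    rw [h, orderOf_one] at hg
    exact hq.one_lt.ne' hg.symm
  have hgN' : (g : H ⧸ K) ∈ N' :=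
    ⟨g, hgP (Subgroup.mem_zpowers g), rfl⟩
  have hN'bot : N' ≠ ⊥ := by
    intro h
    rw [h, Subgroup.mem_bot] at hgN'
    exact hg1 (Subtype.ext hgN')
  -- hence y ∈ N', so the order of y is a power of q
  have hyN' : y ∈ N' := hmono N' hN'norm hN'bot
  have hN'p : IsPGroup q N' := P.isPGroup'.map N.subtype
  obtain ⟨k, hk⟩ := hN'p ⟨y, hyN'⟩
  have hyk : y ^ q ^ k = 1 := by
    have := congrArg (Subtype.val) hk
    simpa using this
  have hdvd : orderOf y ∣ q ^ k := orderOf_dvd_of_pow_eq_one hyk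
  have : p ∣ q := hp.dvd_of_dvd_pow (hpd.trans hdvd)
  exact ((Nat.prime_dvd_prime_iff_eq hp hq).mp this).symm
end

section
/- Let G be a finitely generated solvable group, let N be a nilpotent normal subgroup of G, let m ≥ 1, and let x be a nontrivial element of γ_m(N). Let φ: G → H be a surjective homomorphism onto a finite group with φ(x) ≠ 1 such that Fitt(H) is a finite p-group for a prime p. Then |H| ≥ p, and if m > 1, then |H| ≥ p^(m+1). -/
open Function

lemma le_fitt {H : Type*} [Group H] (K : Subgroup H) (h1 : K.Normal)
    (h2 : Group.IsNilpotent K) : K ≤ fitt H :=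
  le_iSup_of_le K (le_iSup_of_le h1 (le_iSup_of_le h2 le_rfl))

lemma aux_p_le {p : ℕ} (hp : p.Prime) {K : Type*} [Group K] [Finite K] [Nontrivial K]
    (h : IsPGroup p K) : p ≤ Nat.card K := by
  obtain ⟨y, hy⟩ := exists_ne (1 : K)
  haveI : Fact p.Prime := ⟨hp⟩
  obtain ⟨j, hj⟩ := IsPGroup.iff_orderOf.mp h y
  have hj0 : j ≠ 0 := by
    rintro rfl
    simp only [pow_zero, pow_one] at hj
    exact hy (orderOf_eq_one_iff.mp hj)
  have h1 : p ∣ orderOf y := hj ▸ dvd_pow_self p hj0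
  exact Nat.le_of_dvd Nat.card_pos (h1.trans (orderOf_dvd_natCard y))

lemma nontrivial_of_lcs_ne_bot {G : Type*} [Group G] {k : ℕ}
    (h : (⊤ : Subgroup G).lowerCentralSeries k ≠ ⊥) : Nontrivial G := by
  by_contra hc
  rw [not_nontrivial_iff_subsingleton] at hc
  exact h (Subsingleton.elim _ _)

/-- Key lemma: a finite `p`-group with `γ_{k+1} ≠ 1` (Mathlib indexing: `lowerCentralSeries G k`),
`k ≥ 1`, has order at least `p^(k+2)`. -/
lemma key_lemma {p : ℕ} (hp : p.Prime) : ∀ k : ℕ, 1 ≤ k →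
    ∀ (G : Type u) [Group G] [Finite G], IsPGroup p G →
      (⊤ : Subgroup G).lowerCentralSeries k ≠ ⊥ → p ^ (k + 2) ≤ Nat.card G := by
  haveI : Fact p.Prime := ⟨hp⟩
  refine Nat.le_induction ?_ ?_
  · -- base case k = 1 : nonabelian p-group has order ≥ p^3
    intro G _ _ hpG hne
    haveI : Nontrivial G := nontrivial_of_lcs_ne_bot hne
    haveI := hpG.center_nontrivial
    have hZ : p ≤ Nat.card (Subgroup.center G) := aux_p_le hp (hpG.to_subgroup (Subgroup.center G))
    have hQnc : ¬ IsCyclic (G ⧸ Subgroup.center G) := by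
      intro hcyc
      apply hne
      have hcomm : ∀ a b : G, a * b = b * a := by
        intro a b
        exact commutative_of_cyclic_center_quotient (QuotientGroup.mk' (Subgroup.center G))
          (by rw [QuotientGroup.ker_mk']) a b
      rw [lowerCentralSeries_one, commutator_def,
        Subgroup.commutator_eq_bot_iff_le_centralizer]
      intro a _ b _
      exact (hcomm b a)
    obtain ⟨n, hn⟩ := (IsPGroup.iff_card (G := G ⧸ Subgroup.center G)).mp (hpG.to_quotient (Subgroup.center G))
    have hn2 : 2 ≤ n := by
      by_contra hlt
      push_neg at hlt
      refine hQnc (isCyclic_of_card_dvd_prime (p := p) ?_)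
      rw [hn]
      calc p ^ n ∣ p ^ 1 := pow_dvd_pow p (by omega)
        _ = p := pow_one p
    calc p ^ (1 + 2) = p ^ 2 * p := by ring
      _ ≤ p ^ n * Nat.card (Subgroup.center G) :=
          Nat.mul_le_mul (Nat.pow_le_pow_right hp.pos hn2) hZ
      _ = Nat.card (G ⧸ Subgroup.center G) * Nat.card (Subgroup.center G) := by rw [hn]
      _ = Nat.card G := (Subgroup.card_eq_card_quotient_mul_card_subgroup _).symm
  · -- inductive step
    intro k hk ih G _ _ hpG hne
    haveI : Nontrivial G := nontrivial_of_lcs_ne_bot hne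
    haveI := hpG.center_nontrivial
    have hZ : p ≤ Nat.card (Subgroup.center G) := aux_p_le hp (hpG.to_subgroup (Subgroup.center G))
    set Q := G ⧸ Subgroup.center G
    have hQne : (⊤ : Subgroup Q).lowerCentralSeries k ≠ ⊥ := by
      intro hbot
      apply hne
      apply lowerCentralSeries_succ_eq_bot
      have hmap := lowerCentralSeries.map (QuotientGroup.mk' (Subgroup.center G)) k
      rw [hbot, le_bot_iff, Subgroup.map_eq_bot_iff, QuotientGroup.ker_mk'] at hmap
      exact hmap
    have hQ := ih Q (hpG.to_quotient (Subgroup.center G)) hQne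
    calc p ^ (k + 1 + 2) = p ^ (k + 2) * p := by ring
      _ ≤ Nat.card Q * Nat.card (Subgroup.center G) := Nat.mul_le_mul hQ hZ
      _ = Nat.card G := (Subgroup.card_eq_card_quotient_mul_card_subgroup _).symm

/-- let `G` be a finitely generated solvable group, `N ⊴ G` nilpotent, `m ≥ 1`,
and `x ∈ γ_m(N)` nontrivial.  If `φ : G → H` is a surjection onto a finite group with
`φ(x) ≠ 1` and `Fitt(H)` a finite `p`-group, then `|H| ≥ p`, and if `m > 1` then
`|H| ≥ p^(m+1)`. -/
theorem p_dim_lower_bound {G : Type*} [Group G] {H : Type*} [Group H] [Fintype H]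
    (hFG : Group.FG G) (hsolv : IsSolvable G)
    (N : Subgroup G) (hN : N.Normal) (hNnilp : Group.IsNilpotent N)
    (m : ℕ) (hm : 1 ≤ m) (x : G) (hx : x ≠ 1) (hxγ : x ∈ gammaSub N m)
    (φ : G →* H) (hsurj : Surjective φ) (hφx : φ x ≠ 1)
    (p : ℕ) (hp : p.Prime) (hFitt : IsPGroup p (fitt H)) :
    p ≤ Fintype.card H ∧ (1 < m → p ^ (m + 1) ≤ Fintype.card H) := by
  haveI : Group.IsSolvable H := (haveI : Group.IsSolvable G := hsolv; solvable_of_surjective hsurj)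
  haveI : Nontrivial H := ⟨φ x, 1, hφx⟩
  rw [← Nat.card_eq_fintype_card]
  constructor
  · -- part 1: Fitting subgroup is nontrivial since H is nontrivial solvable
    obtain ⟨n, hn⟩ := Group.IsSolvable.solvable (G := H)
    have h0 : derivedSeries H 0 ≠ ⊥ := by
      rw [derivedSeries_zero]
      exact fun h => (hφx (h ▸ Subgroup.mem_top (φ x) : φ x ∈ (⊥ : Subgroup H)))
    -- find the last nontrivial term
    have hex : ∃ j, derivedSeries H j = ⊥ := ⟨n, hn⟩
    classical
    set j := Nat.find hex with hj
    have hjbot : derivedSeries H j = ⊥ := Nat.find_spec hex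
    have hj1 : 1 ≤ j := by
      rcases Nat.eq_zero_or_pos j with h | h
      · exact absurd (h ▸ hjbot) h0
      · exact h
    set K := derivedSeries H (j - 1) with hK
    have hKne : K ≠ ⊥ := Nat.find_min hex (Nat.sub_lt hj1 one_pos)
    have hKcomm : ⁅K, K⁆ = ⊥ := by
      have : derivedSeries H (j - 1 + 1) = ⊥ := by
        rwa [Nat.sub_add_cancel hj1]
      rwa [derivedSeries_succ] at this
    have hKnilp : Group.IsNilpotent K := by
      rw [nilpotent_iff_lowerCentralSeries]
      refine ⟨1, ?_⟩
      rw [lowerCentralSeries_one, commutator_def,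
        Subgroup.commutator_eq_bot_iff_le_centralizer]
      intro a _
      rw [Subgroup.mem_centralizer_iff]
      intro b _
      have := Subgroup.commutator_eq_bot_iff_le_centralizer.mp hKcomm a.2
      have hc := Subgroup.mem_centralizer_iff.mp this b b.2
      exact Subtype.ext hc
    have hKle : K ≤ fitt H := le_fitt K (derivedSeries_normal H _) hKnilp
    obtain ⟨y, hyK, hy1⟩ : ∃ y ∈ K, y ≠ 1 := by
      by_contra hc
      push_neg at hc
      exact hKne ((Subgroup.eq_bot_iff_forall K).mpr hc)
    haveI : Nontrivial (fitt H) :=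
      ⟨⟨y, hKle hyK⟩, 1, fun h => hy1 (Subtype.ext_iff.mp h)⟩
    calc p ≤ Nat.card (fitt H) := aux_p_le hp hFitt
      _ ≤ Nat.card H := Subgroup.card_le_card_group _
  · -- part 2
    intro hm2
    set M := N.map φ with hM
    have hMnormal : M.Normal := hN.map φ hsurj
    haveI := hNnilp
    have hMnilp : Group.IsNilpotent M :=
      nilpotent_of_surjective (φ.subgroupMap N) (φ.subgroupMap_surjective N)
    have hMle : M ≤ fitt H := le_fitt M hMnormal hMnilp
    have hMp : IsPGroup p M := hFitt.to_le hMle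
    -- φ x lands in γ_m(M)
    obtain ⟨y, hy, hyx⟩ := Subgroup.mem_map.mp hxγ
    set f := φ.subgroupMap N with hf
    have hfy : f y ∈ (⊤ : Subgroup ↥M).lowerCentralSeries (m - 1) :=
      lowerCentralSeries.map f (m - 1) (Subgroup.mem_map_of_mem f hy)
    have hfyval : (f y : H) = φ x := by
      rw [← hyx]
      rfl
    have hfy1 : f y ≠ 1 := by
      intro h
      apply hφx
      rw [← hfyval, h]
      rfl
    have hMlcs : (⊤ : Subgroup ↥M).lowerCentralSeries (m - 1) ≠ ⊥ := by
      intro h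
      exact hfy1 (Subgroup.mem_bot.mp (h ▸ hfy))
    have hk1 : 1 ≤ m - 1 := Nat.le_sub_one_of_lt hm2
    have := key_lemma hp (m - 1) hk1 ↥M hMp hMlcs
    have heq : m - 1 + 2 = m + 1 := by omega
    rw [heq] at this
    exact this.trans (Subgroup.card_le_card_group M)
end

section
/- (Fitting's theorem) Let G be a group and let H and K be nilpotent normal subgroups of G, of nilpotency classes c and d respectively. Then the subgroup H ⊔ K generated by H and K (which equals the product HK) is a nilpotent normal subgroup of G of nilpotency class at most c + d. -/
open scoped Pointwise
open Subgroup
open scoped commutatorElement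

namespace FittingAux

variable {G : Type*} [Group G]

/-- `gammaIn H n` is the image in `G` of the `n`-th term of the lower central series of `H`. -/
def gammaIn (H : Subgroup G) : ℕ → Subgroup G
  | 0 => H
  | n + 1 => ⁅gammaIn H n, H⁆

lemma gammaIn_normal (H : Subgroup G) (hH : H.Normal) (n : ℕ) : (gammaIn H n).Normal := by
  induction n with
  | zero => exact hH
  | succ n ih => exact @Subgroup.commutator_normal _ _ _ _ ih hH

lemma map_lcs (H : Subgroup G) (n : ℕ) :
    ((⊤ : Subgroup ↥H).lowerCentralSeries n).map H.subtype = gammaIn H n := by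
  induction n with
  | zero =>
    show Subgroup.map H.subtype ⊤ = H
    rw [← MonoidHom.range_eq_map, H.range_subtype]
  | succ n ih =>
    have : (⊤ : Subgroup ↥H).lowerCentralSeries (n + 1) = ⁅(⊤ : Subgroup ↥H).lowerCentralSeries n, (⊤ : Subgroup ↥H)⁆ := rfl
    rw [this, Subgroup.map_commutator, ih, gammaIn]
    congr 1
    show Subgroup.map H.subtype ⊤ = H
    rw [← MonoidHom.range_eq_map, H.range_subtype]

lemma gammaIn_eq_bot_of_le (H : Subgroup G) {c n : ℕ} (h : gammaIn H c = ⊥) (hcn : c ≤ n) :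
    gammaIn H n = ⊥ := by
  obtain ⟨k, rfl⟩ := Nat.exists_eq_add_of_le hcn
  induction k with
  | zero => simpa using h
  | succ k ih =>
    have : gammaIn H (c + (k + 1)) = ⁅gammaIn H (c + k), H⁆ := rfl
    rw [this, ih (Nat.le_add_right _ _), Subgroup.commutator_bot_left]

/-- The subgroup of elements `g` with `⁅g, l⁆ ∈ R` for all `l ∈ L`, when `R` is normal. -/
def commDom (L R : Subgroup G) (hR : R.Normal) : Subgroup G where
  carrier := {g | ∀ l ∈ L, ⁅g, l⁆ ∈ R}
  one_mem' := by intro l hl; simpa using R.one_mem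
  mul_mem' := by
    intro a b ha hb l hl
    have : ⁅a * b, l⁆ = a * ⁅b, l⁆ * a⁻¹ * ⁅a, l⁆ := by
      simp only [commutatorElement_def]; group
    rw [this]
    exact R.mul_mem (hR.conj_mem _ (hb l hl) a) (ha l hl)
  inv_mem' := by
    intro a ha l hl
    have : ⁅a⁻¹, l⁆ = a⁻¹ * ⁅a, l⁆⁻¹ * (a⁻¹)⁻¹ := by
      simp only [commutatorElement_def]; group
    rw [this]
    exact hR.conj_mem _ (R.inv_mem (ha l hl)) a⁻¹

lemma commutator_le_iff_le_commDom {A L R : Subgroup G} (hR : R.Normal) :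
    ⁅A, L⁆ ≤ R ↔ A ≤ commDom L R hR := by
  rw [Subgroup.commutator_le]
  rfl

lemma iSup_normal {ι : Sort*} (f : ι → Subgroup G) (h : ∀ i, (f i).Normal) :
    (⨆ i, f i).Normal := by
  constructor
  intro n hn g
  have key : Subgroup.map (MulAut.conj g).toMonoidHom (⨆ i, f i) = ⨆ i, f i := by
    rw [Subgroup.map_iSup]
    congr 1
    funext i
    have := @Subgroup.Normal.conj_smul_eq_self _ _ g (f i) (h i)
    rwa [Subgroup.pointwise_smul_def] at this
  rw [← key]
  exact ⟨n, hn, rfl⟩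

/-- Mixed commutator bound subgroups. -/
def fit (H K : Subgroup G) : ℕ → ℕ → Subgroup G
  | 0, 0 => ⊤
  | i + 1, 0 => gammaIn H i
  | 0, j + 1 => gammaIn K j
  | i + 1, j + 1 => gammaIn H i ⊓ gammaIn K j

lemma fit_normal (H K : Subgroup G) (hH : H.Normal) (hK : K.Normal) :
    ∀ i j, (fit H K i j).Normal
  | 0, 0 => ⟨fun n _ g => Subgroup.mem_top _⟩
  | i + 1, 0 => gammaIn_normal H hH i
  | 0, j + 1 => gammaIn_normal K hK j
  | i + 1, j + 1 =>
    ⟨fun n hn g => ⟨(gammaIn_normal H hH i).conj_mem _ hn.1 g,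
      (gammaIn_normal K hK j).conj_mem _ hn.2 g⟩⟩

lemma fit_comm (H K : Subgroup G) : ∀ i j, fit H K i j = fit K H j i
  | 0, 0 => rfl
  | i + 1, 0 => rfl
  | 0, j + 1 => rfl
  | i + 1, j + 1 => inf_comm _ _

lemma fit_step_left (H K : Subgroup G) (hH : H.Normal) (hK : K.Normal) :
    ∀ i j, ⁅fit H K i j, H⁆ ≤ fit H K (i + 1) j
  | 0, 0 => @Subgroup.commutator_le_right _ _ ⊤ H hH
  | i + 1, 0 => le_of_eq rfl
  | 0, j + 1 =>
    le_inf (@Subgroup.commutator_le_right _ _ _ _ hH)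
      (@Subgroup.commutator_le_left _ _ _ _ (gammaIn_normal K hK j))
  | i + 1, j + 1 =>
    le_inf (commutator_mono inf_le_left le_rfl)
      ((commutator_mono inf_le_right le_rfl).trans
        (@Subgroup.commutator_le_left _ _ _ _ (gammaIn_normal K hK j)))

lemma fit_step_right (H K : Subgroup G) (hH : H.Normal) (hK : K.Normal) (i j : ℕ) :
    ⁅fit H K i j, K⁆ ≤ fit H K i (j + 1) := by
  rw [fit_comm H K i j, fit_comm H K i (j + 1)]
  exact fit_step_left K H hK hH j i

/-- The bounding subgroup for step `n` of the lower central series of `H ⊔ K`. -/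
def fitSup (H K : Subgroup G) (n : ℕ) : Subgroup G :=
  ⨆ p : {p : ℕ × ℕ // p.1 + p.2 = n + 1}, fit H K p.1.1 p.1.2

lemma fitSup_normal (H K : Subgroup G) (hH : H.Normal) (hK : K.Normal) (n : ℕ) :
    (fitSup H K n).Normal :=
  iSup_normal _ fun p => fit_normal H K hH hK p.1.1 p.1.2

lemma fit_le_fitSup (H K : Subgroup G) {i j n : ℕ} (hij : i + j = n + 1) :
    fit H K i j ≤ fitSup H K n :=
  le_iSup (fun p : {p : ℕ × ℕ // p.1 + p.2 = n + 1} => fit H K p.1.1 p.1.2) ⟨(i, j), hij⟩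

lemma gammaIn_sup_le (H K : Subgroup G) (hH : H.Normal) (hK : K.Normal) (n : ℕ) :
    gammaIn (H ⊔ K) n ≤ fitSup H K n := by
  induction n with
  | zero =>
    show H ⊔ K ≤ fitSup H K 0
    exact sup_le (fit_le_fitSup H K (i := 1) (j := 0) rfl)
      (fit_le_fitSup H K (i := 0) (j := 1) rfl)
  | succ n ih =>
    show ⁅gammaIn (H ⊔ K) n, H ⊔ K⁆ ≤ fitSup H K (n + 1)
    have hR := fitSup_normal H K hH hK (n + 1)
    calc ⁅gammaIn (H ⊔ K) n, H ⊔ K⁆ ≤ ⁅fitSup H K n, H ⊔ K⁆ := commutator_mono ih le_rfl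
      _ = ⁅H ⊔ K, fitSup H K n⁆ := commutator_comm _ _
      _ ≤ fitSup H K (n + 1) := by
          rw [commutator_le_iff_le_commDom hR]
          apply sup_le
          · rw [← commutator_le_iff_le_commDom hR, commutator_comm, fitSup,
              commutator_le_iff_le_commDom hR]
            apply iSup_le
            rintro ⟨⟨i, j⟩, hij⟩
            rw [← commutator_le_iff_le_commDom hR]
            exact (fit_step_left H K hH hK i j).trans (fit_le_fitSup H K (by omega))
          · rw [← commutator_le_iff_le_commDom hR, commutator_comm, fitSup,
              commutator_le_iff_le_commDom hR]
            apply iSup_le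
            rintro ⟨⟨i, j⟩, hij⟩
            rw [← commutator_le_iff_le_commDom hR]
            exact (fit_step_right H K hH hK i j).trans (fit_le_fitSup H K (by omega))

end FittingAux

open FittingAux

/-- Fitting's theorem: if `H` and `K` are nilpotent normal subgroups of `G`, of
nilpotency classes `c` and `d` respectively (class `c` means `γ_{c+1} = 1` and `γ_c ≠ 1`, i.e.
`lowerCentralSeries _ c = ⊥` is first attained at `c`), then `H ⊔ K` equals the product `HK`
and is a nilpotent normal subgroup of nilpotency class at most `c + d`. -/
theorem fitting_theorem {G : Type*} [Group G] (H K : Subgroup G)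
    (hHn : H.Normal) (hKn : K.Normal)
    (c d : ℕ)
    (hHc : (⊤ : Subgroup ↥H).lowerCentralSeries c = ⊥) (hHc' : ∀ c' : ℕ, (⊤ : Subgroup ↥H).lowerCentralSeries c' = ⊥ → c ≤ c')
    (hKd : (⊤ : Subgroup ↥K).lowerCentralSeries d = ⊥) (hKd' : ∀ d' : ℕ, (⊤ : Subgroup ↥K).lowerCentralSeries d' = ⊥ → d ≤ d') :
    ((H ⊔ K : Subgroup G) : Set G) = (H : Set G) * (K : Set G) ∧
    (H ⊔ K).Normal ∧ Group.IsNilpotent ↥(H ⊔ K) ∧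
    (⊤ : Subgroup ↥(H ⊔ K)).lowerCentralSeries (c + d) = ⊥ := by
  haveI := hHn; haveI := hKn
  have hHbot : gammaIn H c = ⊥ := by rw [← map_lcs, hHc, Subgroup.map_bot]
  have hKbot : gammaIn K d = ⊥ := by rw [← map_lcs, hKd, Subgroup.map_bot]
  have hfit : ∀ i j : ℕ, i + j = c + d + 1 → fit H K i j = ⊥ := by
    intro i j hij
    match i, j with
    | 0, 0 => omega
    | i + 1, 0 =>
      exact gammaIn_eq_bot_of_le H hHbot (by omega)
    | 0, j + 1 =>
      exact gammaIn_eq_bot_of_le K hKbot (by omega)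
    | i + 1, j + 1 =>
      show gammaIn H i ⊓ gammaIn K j = ⊥
      rcases le_or_gt c i with h | h
      · rw [gammaIn_eq_bot_of_le H hHbot h, bot_inf_eq]
      · rw [gammaIn_eq_bot_of_le K hKbot (by omega : d ≤ j), inf_bot_eq]
  have hsup : fitSup H K (c + d) = ⊥ := by
    rw [eq_bot_iff]
    apply iSup_le
    rintro ⟨⟨i, j⟩, hij⟩
    exact le_of_eq (hfit i j hij)
  have hbot : gammaIn (H ⊔ K) (c + d) = ⊥ :=
    le_bot_iff.mp ((gammaIn_sup_le H K hHn hKn (c + d)).trans_eq hsup)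
  have hlcs : (⊤ : Subgroup ↥(H ⊔ K)).lowerCentralSeries (c + d) = ⊥ := by
    apply Subgroup.map_injective (Subgroup.subtype_injective (H ⊔ K))
    rw [map_lcs, hbot, Subgroup.map_bot]
  exact ⟨Subgroup.mul_normal H K, Subgroup.sup_normal H K,
    Subgroup.nilpotent_iff_lowerCentralSeries.mpr ⟨c + d, hlcs⟩, hlcs⟩
end

section
/- There exist constants c, C > 0 such that for all natural numbers n ≥ 2, c·n ≤ log(lcm{1, 2, …, n}) ≤ C·n. (Equivalently, log of the least common multiple of the first n natural numbers grows linearly in n.) -/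
/-- `lcm {1, …, n}` -/
def lcmUpTo (k : ℕ) : ℕ := (Finset.Icc 1 k).lcm id

open Finset Nat

lemma lcmUpTo_ne_zero (n : ℕ) : lcmUpTo n ≠ 0 := by
  unfold lcmUpTo
  rw [Ne, Finset.lcm_eq_zero_iff]
  rintro ⟨i, hi, h0⟩
  simp only [Finset.mem_Icc] at hi
  simp only [id] at h0
  omega

lemma dvd_lcmUpTo {i n : ℕ} (h1 : 1 ≤ i) (h2 : i ≤ n) : i ∣ lcmUpTo n :=
  Finset.dvd_lcm (Finset.mem_Icc.mpr ⟨h1, h2⟩)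

lemma prime_pow_le_dvd_lcmUpTo {p k n : ℕ} (hp : p.Prime) (hn : n ≠ 0)
    (h : p ^ k ≤ n) : k ≤ (lcmUpTo n).factorization p := by
  have hd : p ^ k ∣ lcmUpTo n := dvd_lcmUpTo (Nat.one_le_iff_ne_zero.mpr (pow_ne_zero _ hp.ne_zero)) h
  exact (Nat.Prime.pow_dvd_iff_le_factorization hp (lcmUpTo_ne_zero n)).mp hd

lemma centralBinom_dvd_lcmUpTo {n : ℕ} (hn : 2 ≤ n) : Nat.centralBinom (n / 2) ∣ lcmUpTo n := by
  have hm : 0 < n / 2 := by omega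
  have hcb : Nat.centralBinom (n / 2) ≠ 0 := (Nat.centralBinom_pos _).ne'
  rw [← Nat.factorization_le_iff_dvd hcb (lcmUpTo_ne_zero n)]
  intro p
  by_cases hp : p.Prime
  · have hle : p ^ (Nat.centralBinom (n / 2)).factorization p ≤ 2 * (n / 2) := by
      have := Nat.pow_factorization_choose_le (p := p) (n := 2 * (n / 2)) (k := n / 2) (by omega)
      rwa [Nat.centralBinom]
    exact prime_pow_le_dvd_lcmUpTo hp (by omega) (le_trans hle (by omega))
  · simp [Nat.factorization_eq_zero_of_not_prime _ hp]

/-- the dominating product -/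
def lcmDom (n : ℕ) : ℕ := ∏ p ∈ (n + 1).primesBelow, p ^ (Nat.log p n)

lemma lcmDom_pos (n : ℕ) : 0 < lcmDom n :=
  Finset.prod_pos fun p hp => pow_pos (Nat.prime_of_mem_primesBelow hp).pos _

lemma lcmUpTo_dvd_lcmDom {n : ℕ} (hn : 1 ≤ n) : lcmUpTo n ∣ lcmDom n := by
  apply Finset.lcm_dvd
  intro i hi
  rw [Finset.mem_Icc] at hi
  rw [id, ← Nat.factorization_le_iff_dvd (by omega) (lcmDom_pos n).ne']
  intro q
  by_cases hq : q.Prime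
  · by_cases hsup : i.factorization q = 0
    · simp [hsup]
    have hqd : q ∣ i := Nat.dvd_of_factorization_pos hsup
    have hqn : q ≤ n := le_trans (Nat.le_of_dvd (by omega) hqd) hi.2
    have hmem : q ∈ (n + 1).primesBelow := Nat.mem_primesBelow.mpr ⟨by omega, hq⟩
    -- i.factorization q ≤ log q n
    have h1 : i.factorization q ≤ Nat.log q n := by
      rw [Nat.le_log_iff_pow_le hq.one_lt (by omega : n ≠ 0)]
      exact le_trans (Nat.le_of_dvd (by omega) (Nat.ordProj_dvd i q)) hi.2
    -- log q n ≤ (lcmDom n).factorization q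
    have h2 : Nat.log q n ≤ (lcmDom n).factorization q := by
      have hd : q ^ Nat.log q n ∣ lcmDom n := Finset.dvd_prod_of_mem _ hmem
      exact (Nat.Prime.pow_dvd_iff_le_factorization hq (lcmDom_pos n).ne').mp hd
    exact le_trans h1 h2
  · simp [Nat.factorization_eq_zero_of_not_prime _ hq]

lemma lcmDom_le {n : ℕ} (hn : 1 ≤ n) : lcmDom n ≤ n ^ (Nat.sqrt n) * 4 ^ n := by
  classical
  unfold lcmDom
  rw [← Finset.prod_filter_mul_prod_filter_not ((n + 1).primesBelow) (fun p => p * p ≤ n)]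
  have h1 : (∏ p ∈ (n + 1).primesBelow with p * p ≤ n, p ^ (Nat.log p n)) ≤ n ^ (Nat.sqrt n) := by
    calc (∏ p ∈ (n + 1).primesBelow with p * p ≤ n, p ^ (Nat.log p n))
        ≤ n ^ ((n + 1).primesBelow.filter (fun p => p * p ≤ n)).card := by
          apply Finset.prod_le_pow_card
          intro p hp
          exact Nat.pow_log_le_self p (by omega)
      _ ≤ n ^ (Nat.sqrt n) := by
          apply Nat.pow_le_pow_right (by omega)
          calc ((n + 1).primesBelow.filter (fun p => p * p ≤ n)).card
              ≤ (Finset.Icc 2 (Nat.sqrt n)).card := by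
                apply Finset.card_le_card
                intro p hp
                simp only [Finset.mem_filter, Nat.mem_primesBelow] at hp
                rw [Finset.mem_Icc]
                exact ⟨hp.1.2.two_le, Nat.le_sqrt.mpr hp.2⟩
            _ ≤ Nat.sqrt n := by rw [Nat.card_Icc]; omega
  have h2 : (∏ p ∈ (n + 1).primesBelow with ¬ p * p ≤ n, p ^ (Nat.log p n)) ≤ 4 ^ n := by
    calc (∏ p ∈ (n + 1).primesBelow with ¬ p * p ≤ n, p ^ (Nat.log p n))
        ≤ ∏ p ∈ (n + 1).primesBelow with ¬ p * p ≤ n, p := by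
          apply Finset.prod_le_prod'
          intro p hp
          simp only [Finset.mem_filter, Nat.mem_primesBelow] at hp
          have hlog : Nat.log p n ≤ 1 := by
            have : n < p ^ 2 := by rw [pow_two]; omega
            have := (Nat.log_lt_iff_lt_pow hp.1.2.one_lt (by omega : n ≠ 0)).mpr this
            omega
          calc p ^ (Nat.log p n) ≤ p ^ 1 := Nat.pow_le_pow_right hp.1.2.pos hlog
            _ = p := pow_one p
      _ ≤ ∏ p ∈ (n + 1).primesBelow, p := by
          apply Finset.prod_le_prod_of_subset_of_one_le' (Finset.filter_subset _ _)
          intro p hp _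
          exact (Nat.prime_of_mem_primesBelow hp).one_lt.le
      _ = primorial n := rfl
      _ ≤ 4 ^ n := primorial_le_4_pow n
  exact Nat.mul_le_mul h1 h2

lemma two_pow_le_centralBinom {m : ℕ} (hm : 4 ≤ m) : 2 ^ m ≤ Nat.centralBinom m := by
  have h1 : 4 ^ m < m * Nat.centralBinom m := Nat.four_pow_lt_mul_centralBinom m hm
  have h2 : m < 2 ^ m := Nat.lt_two_pow_self (n := m)
  have h4 : (4 : ℕ) ^ m = 2 ^ m * 2 ^ m := by
    rw [← mul_pow]; norm_num
  nlinarith [Nat.centralBinom_pos m]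

/-- Prime Number Theorem bound: `log (lcm {1, …, n})` grows linearly in `n`. -/
theorem log_lcm_linear :
    ∃ c C : ℝ, 0 < c ∧ 0 < C ∧ ∀ n : ℕ, 2 ≤ n →
      c * n ≤ Real.log (lcmUpTo n) ∧ Real.log (lcmUpTo n) ≤ C * n := by
  have hlog2 : (0 : ℝ) < Real.log 2 := Real.log_pos (by norm_num)
  refine ⟨Real.log 2 / 9, Real.log 4 + 2, by positivity, by positivity, ?_⟩
  intro n hn
  have hlcm_pos : 0 < lcmUpTo n := Nat.pos_of_ne_zero (lcmUpTo_ne_zero n)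
  have h2dvd : (2 : ℕ) ∣ lcmUpTo n := dvd_lcmUpTo (by norm_num) hn
  have hlcm2 : 2 ≤ lcmUpTo n := Nat.le_of_dvd hlcm_pos h2dvd
  constructor
  · -- lower bound
    rcases lt_or_ge n 8 with h8 | h8
    · -- small n : lcmUpTo n ≥ 2
      have hlow : Real.log 2 ≤ Real.log (lcmUpTo n) := by
        apply Real.log_le_log (by norm_num)
        exact_mod_cast hlcm2
      have : Real.log 2 / 9 * n ≤ Real.log 2 := by
        rw [div_mul_eq_mul_div, div_le_iff₀ (by norm_num)]
        have : (n : ℝ) ≤ 9 := by exact_mod_cast (by omega : n ≤ 9)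
        nlinarith
      linarith
    · -- large n
      set m := n / 2 with hm
      have hm4 : 4 ≤ m := by omega
      have hcb : 2 ^ m ≤ Nat.centralBinom m := two_pow_le_centralBinom hm4
      have hdvd := centralBinom_dvd_lcmUpTo hn
      have hle : 2 ^ m ≤ lcmUpTo n := le_trans hcb (Nat.le_of_dvd hlcm_pos hdvd)
      have hlow : (m : ℝ) * Real.log 2 ≤ Real.log (lcmUpTo n) := by
        rw [← Real.log_pow]
        apply Real.log_le_log (by positivity)
        exact_mod_cast hle
      have h9m : (n : ℝ) ≤ 9 * m := by exact_mod_cast (by omega : n ≤ 9 * m)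
      calc Real.log 2 / 9 * n ≤ Real.log 2 / 9 * (9 * m) := by
            apply mul_le_mul_of_nonneg_left h9m (by positivity)
        _ = (m : ℝ) * Real.log 2 := by ring
        _ ≤ Real.log (lcmUpTo n) := hlow
  · -- upper bound
    have hdvd := lcmUpTo_dvd_lcmDom (by omega : 1 ≤ n)
    have hle : (lcmUpTo n : ℝ) ≤ (n : ℝ) ^ (Nat.sqrt n) * 4 ^ n := by
      exact_mod_cast le_trans (Nat.le_of_dvd (lcmDom_pos n) hdvd) (lcmDom_le (by omega))
    have hn1 : (1 : ℝ) ≤ (n : ℝ) := by exact_mod_cast (by omega : 1 ≤ n)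
    have hsqrt : (0 : ℝ) < Real.sqrt n := Real.sqrt_pos.mpr (by linarith)
    have hlogle : Real.log (lcmUpTo n) ≤ (Nat.sqrt n : ℝ) * Real.log n + n * Real.log 4 := by
      calc Real.log (lcmUpTo n) ≤ Real.log ((n : ℝ) ^ (Nat.sqrt n) * 4 ^ n) :=
            Real.log_le_log (by exact_mod_cast hlcm_pos) hle
        _ = (Nat.sqrt n : ℝ) * Real.log n + n * Real.log 4 := by
            rw [Real.log_mul (by positivity) (by positivity), Real.log_pow, Real.log_pow]
    have hsq1 : (Nat.sqrt n : ℝ) ≤ Real.sqrt n := Real.nat_sqrt_le_real_sqrt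
    have hsq2 : Real.log n ≤ 2 * Real.sqrt n := by
      have h1 : Real.log (Real.sqrt n) = Real.log n / 2 :=
        Real.log_sqrt (by linarith : (0:ℝ) ≤ (n:ℝ))
      have h2 : Real.log (Real.sqrt n) ≤ Real.sqrt n - 1 := Real.log_le_sub_one_of_pos hsqrt
      linarith
    have hlogn0 : 0 ≤ Real.log n := Real.log_nonneg hn1
    have hkey : (Nat.sqrt n : ℝ) * Real.log n ≤ 2 * n := by
      calc (Nat.sqrt n : ℝ) * Real.log n ≤ Real.sqrt n * (2 * Real.sqrt n) := by
            apply mul_le_mul hsq1 hsq2 hlogn0 (Real.sqrt_nonneg _)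
        _ = 2 * (Real.sqrt n * Real.sqrt n) := by ring
        _ = 2 * n := by rw [Real.mul_self_sqrt (by linarith : (0:ℝ) ≤ (n:ℝ))]
    calc Real.log (lcmUpTo n) ≤ (Nat.sqrt n : ℝ) * Real.log n + n * Real.log 4 := hlogle
      _ ≤ 2 * n + n * Real.log 4 := by linarith
      _ = (Real.log 4 + 2) * n := by ring
end
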